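/- arXiv:2506.17365 — 6 statements merged into one kernel-verified Lean document; each statement's English description precedes it below -/
import Mathlib

section
/- For all n×n complex matrices A and B, the Frobenius norm satisfies ‖AB − BA‖_F² ≤ 2‖A‖_F²‖B‖_F². -/
open Matrix Kronecker BigOperators

/-- Squared Frobenius norm of a complex matrix. -/
noncomputable def frobSq {m n : Type*} [Fintype m] [Fintype n] (A : Matrix m n ℂ) : ℝ :=
  ∑ i, ∑ j, ‖A i j‖ ^ 2

/-- Eigenvalues of a Hermitian matrix sorted in decreasing order (junk value `[]` otherwise). -/
noncomputable def eigsSorted {k : Type*} [Fintype k] [DecidableEq k] (H : Matrix k k ℂ) : List ℝ :=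
  if hH : H.IsHermitian then (Finset.univ.toList.map hH.eigenvalues).insertionSort (· ≥ ·) else []

/-- `eigNth H i` is the `i`-th largest eigenvalue (1-indexed) of the Hermitian matrix `H`,
with junk value `0` out of range. -/
noncomputable def eigNth {k : Type*} [Fintype k] [DecidableEq k] (H : Matrix k k ℂ) (i : ℕ) : ℝ :=
  (eigsSorted H).getD (i - 1) 0

/-- `sv A i` is the `i`-th largest singular value (1-indexed) of `A`,
taken to be `0` out of range. -/
noncomputable def sv {m n : Type*} [Fintype m] [Fintype n] [DecidableEq n]
    (A : Matrix m n ℂ) (i : ℕ) : ℝ :=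
  Real.sqrt (eigNth (Aᴴ * A) i)

/-- `vecCols Y` stacks the columns of `Y` into one column vector. -/
def vecCols {n m : Type*} (Y : Matrix n m ℂ) : m × n → ℂ := fun p => Y p.2 p.1

namespace BWaux

open Matrix BigOperators Finset


lemma frobSq_eq {m n : Type*} [Fintype m] [Fintype n] (A : Matrix m n ℂ) :
    frobSq A = ∑ i, ∑ j, Complex.normSq (A i j) := by
  simp [frobSq, Complex.sq_norm]

lemma frobSq_eq_trace {n : Type*} [Fintype n] [DecidableEq n] (M : Matrix n n ℂ) :
    frobSq M = (Matrix.trace (Mᴴ * M)).re := by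
  rw [frobSq_eq, Matrix.trace]
  rw [Complex.re_sum]
  rw [Finset.sum_comm]
  congr 1; ext j
  rw [Matrix.diag, Matrix.mul_apply, Complex.re_sum]
  congr 1; ext i
  rw [Matrix.conjTranspose_apply]
  simp [Complex.normSq_eq_conj_mul_self, Complex.normSq_apply]

lemma frobSq_unitary {n : Type*} [Fintype n] [DecidableEq n] (M U V : Matrix n n ℂ)
    (hU : U * Uᴴ = 1) (hV : V * Vᴴ = 1) :
    frobSq (Uᴴ * M * V) = frobSq M := by
  rw [frobSq_eq_trace, frobSq_eq_trace]
  congr 1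
  have h1 : (Uᴴ * M * V)ᴴ * (Uᴴ * M * V) = Vᴴ * (Mᴴ * U) * (Uᴴ * M * V) := by
    rw [Matrix.conjTranspose_mul, Matrix.conjTranspose_mul, Matrix.conjTranspose_conjTranspose,
      Matrix.mul_assoc]
  rw [h1]
  have h2 : Vᴴ * (Mᴴ * U) * (Uᴴ * M * V) = Vᴴ * (Mᴴ * M) * V := by
    rw [show Vᴴ * (Mᴴ * U) * (Uᴴ * M * V) = Vᴴ * (Mᴴ * (U * Uᴴ) * M) * V by
      simp only [Matrix.mul_assoc], hU]
    simp [Matrix.mul_assoc]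
  rw [h2, Matrix.trace_mul_cycle, ← Matrix.mul_assoc, hV, Matrix.one_mul]


open Matrix BigOperators Finset Complex

lemma quad_cs {ι : Type*} (s : Finset ι) (f : ι → ℂ) (M : ι → ι → ℂ)
    (hf : ∑ k ∈ s, Complex.normSq (f k) ≤ 1) :
    Complex.normSq (∑ k ∈ s, ∑ l ∈ s, (starRingEnd ℂ) (f k) * M k l * f l)
      ≤ ∑ k ∈ s, ∑ l ∈ s, Complex.normSq (M k l) := by
  have hfa : ∑ k ∈ s, ‖f k‖ ^ 2 ≤ 1 := by
    simpa only [Complex.sq_norm] using hf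
  have hg : ∀ k ∈ s, (‖∑ l ∈ s, M k l * f l‖)^2 ≤ ∑ l ∈ s, Complex.normSq (M k l) := by
    intro k _
    calc (‖∑ l ∈ s, M k l * f l‖)^2
        ≤ (∑ l ∈ s, ‖M k l * f l‖)^2 := by
          apply pow_le_pow_left₀ (norm_nonneg _) (norm_sum_le _ _)
      _ = (∑ l ∈ s, ‖M k l‖ * ‖f l‖)^2 := by
          congr 1; exact Finset.sum_congr rfl fun l _ => norm_mul _ _
      _ ≤ (∑ l ∈ s, ‖M k l‖ ^ 2) * (∑ l ∈ s, ‖f l‖ ^ 2) :=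
          Finset.sum_mul_sq_le_sq_mul_sq s _ _
      _ ≤ (∑ l ∈ s, ‖M k l‖ ^ 2) * 1 := by
          apply mul_le_mul_of_nonneg_left hfa
          exact Finset.sum_nonneg fun l _ => sq_nonneg _
      _ = ∑ l ∈ s, Complex.normSq (M k l) := by
          rw [mul_one]; exact Finset.sum_congr rfl fun l _ => Complex.sq_norm _
  calc Complex.normSq (∑ k ∈ s, ∑ l ∈ s, (starRingEnd ℂ) (f k) * M k l * f l)
      = (‖∑ k ∈ s, ∑ l ∈ s, (starRingEnd ℂ) (f k) * M k l * f l‖)^2 :=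
        (Complex.sq_norm _).symm
    _ ≤ (∑ k ∈ s, ‖∑ l ∈ s, (starRingEnd ℂ) (f k) * M k l * f l‖)^2 := by
        apply pow_le_pow_left₀ (norm_nonneg _) (norm_sum_le _ _)
    _ = (∑ k ∈ s, ‖f k‖ * ‖∑ l ∈ s, M k l * f l‖)^2 := by
        congr 1; apply Finset.sum_congr rfl; intro k _
        rw [show (∑ l ∈ s, (starRingEnd ℂ) (f k) * M k l * f l)
            = (starRingEnd ℂ) (f k) * ∑ l ∈ s, M k l * f l by
          rw [Finset.mul_sum]; exact Finset.sum_congr rfl fun l _ => by ring]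
        rw [norm_mul, Complex.norm_conj]
    _ ≤ (∑ k ∈ s, ‖f k‖ ^ 2) * (∑ k ∈ s, (‖∑ l ∈ s, M k l * f l‖)^2) :=
        Finset.sum_mul_sq_le_sq_mul_sq s _ _
    _ ≤ 1 * (∑ k ∈ s, ∑ l ∈ s, Complex.normSq (M k l)) := by
        apply mul_le_mul hfa (Finset.sum_le_sum hg)
          (Finset.sum_nonneg fun k _ => sq_nonneg _) zero_le_one
    _ = _ := one_mul _

open Matrix BigOperators Finset Complex

variable {n : ℕ}

noncomputable def Sfm (P : Matrix (Fin n) (Fin n) ℂ) (a b : Fin n → ℂ) : ℂ :=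
  star a ⬝ᵥ (P *ᵥ b)

lemma Sfm_apply (P : Matrix (Fin n) (Fin n) ℂ) (a b : Fin n → ℂ) :
    Sfm P a b = ∑ k, ∑ l, (starRingEnd ℂ) (a k) * P k l * b l := by
  unfold Sfm
  rw [dotProduct]
  apply Finset.sum_congr rfl; intro k _
  rw [Matrix.mulVec, dotProduct, Finset.mul_sum]
  apply Finset.sum_congr rfl; intro l _
  simp only [Pi.star_apply, RCLike.star_def]
  ring

lemma Sfm_bilin (P : Matrix (Fin n) (Fin n) ℂ) (x y : Fin n → ℂ) (γ δ : ℂ) :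
    Sfm P (γ • x + δ • y) (γ • x + δ • y)
      = ((starRingEnd ℂ) γ * γ) * Sfm P x x + ((starRingEnd ℂ) γ * δ) * Sfm P x y
        + ((starRingEnd ℂ) δ * γ) * Sfm P y x + ((starRingEnd ℂ) δ * δ) * Sfm P y y := by
  unfold Sfm
  simp only [star_add, star_smul, Matrix.mulVec_add, Matrix.mulVec_smul, add_dotProduct,
    dotProduct_add, smul_dotProduct, dotProduct_smul, smul_eq_mul,
    RCLike.star_def, smul_smul]
  ring

lemma Sfm_change (P W : Matrix (Fin n) (Fin n) ℂ) (t : Fin n → ℂ) :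
    Sfm (Wᴴ * P * W) t t = Sfm P (W *ᵥ t) (W *ᵥ t) := by
  unfold Sfm
  rw [show (Wᴴ * P * W) *ᵥ t = Wᴴ *ᵥ (P *ᵥ (W *ᵥ t)) by
    rw [Matrix.mulVec_mulVec, Matrix.mulVec_mulVec, Matrix.mul_assoc]]
  rw [Matrix.star_mulVec, dotProduct_mulVec _ Wᴴ _]


lemma nsq_sub_le (z w : ℂ) : Complex.normSq (z - w) ≤ 2*(Complex.normSq z + Complex.normSq w) := by
  simp only [Complex.normSq_apply, Complex.sub_re, Complex.sub_im]
  nlinarith [sq_nonneg (z.re + w.re), sq_nonneg (z.im + w.im)]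

variable {n : ℕ}

lemma claim3 (P W : Matrix (Fin n) (Fin n) ℂ) (hW1 : Wᴴ * W = 1) (hW2 : W * Wᴴ = 1) (k0 : Fin n) :
    Complex.normSq (P k0 k0 - (Wᴴ * P * W) k0 k0)
      ≤ 2 * ((∑ k ∈ Finset.univ.erase k0, ∑ l ∈ Finset.univ.erase k0, Complex.normSq (P k l))
           + (∑ k ∈ Finset.univ.erase k0, ∑ l ∈ Finset.univ.erase k0,
               Complex.normSq ((Wᴴ * P * W) k l))) := by
  classical
  set Q := Wᴴ * P * W with hQdef
  set E := Finset.univ.erase k0 with hEdef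
  set v : Fin n → ℂ := fun i => W i k0 with hvdef
  set α : ℂ := W k0 k0 with hαdef
  set e : Fin n → ℂ := fun i => if i = k0 then 1 else 0 with hedef
  -- column norm 1
  have hcol : ∑ i, Complex.normSq (v i) = 1 := by
    have h : (Wᴴ * W) k0 k0 = (1 : Matrix (Fin n) (Fin n) ℂ) k0 k0 := by rw [hW1]
    rw [Matrix.mul_apply, Matrix.one_apply_eq] at h
    have h2 : ∑ j, ((Complex.normSq (v j) : ℂ)) = 1 := by
      rw [← h]
      apply Finset.sum_congr rfl; intro j _
      rw [Matrix.conjTranspose_apply, RCLike.star_def, mul_comm, Complex.mul_conj]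
    exact_mod_cast h2
  have hrow : ∑ j, Complex.normSq (W k0 j) = 1 := by
    have h : (W * Wᴴ) k0 k0 = (1 : Matrix (Fin n) (Fin n) ℂ) k0 k0 := by rw [hW2]
    rw [Matrix.mul_apply, Matrix.one_apply_eq] at h
    have h2 : ∑ j, ((Complex.normSq (W k0 j) : ℂ)) = 1 := by
      rw [← h]
      apply Finset.sum_congr rfl; intro j _
      rw [Matrix.conjTranspose_apply, RCLike.star_def, Complex.mul_conj]
    exact_mod_cast h2
  have hvk0 : v k0 = α := rfl
  have hnn : ∀ i, 0 ≤ Complex.normSq (v i) := fun i => Complex.normSq_nonneg _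
  have hαle : Complex.normSq α ≤ 1 := by
    rw [← hcol, ← hvk0]
    exact Finset.single_le_sum (fun i _ => hnn i) (Finset.mem_univ k0)
  set a : ℝ := 1 - Complex.normSq α with hadef
  have ha0 : 0 ≤ a := by simp only [hadef]; linarith
  have hEv : ∑ i ∈ E, Complex.normSq (v i) = a := by
    have h := Finset.sum_erase_add Finset.univ (fun i => Complex.normSq (v i)) (Finset.mem_univ k0)
    rw [hcol] at h
    simp only [hEdef, hadef, ← hvk0]
    linarith
  have hEr : ∑ j ∈ E, Complex.normSq (W k0 j) = a := by
    have h := Finset.sum_erase_add Finset.univ (fun j => Complex.normSq (W k0 j)) (Finset.mem_univ k0)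
    rw [hrow] at h
    simp only [hEdef, hadef]
    have : Complex.normSq (W k0 k0) = Complex.normSq α := by rw [hαdef]
    linarith [this]
  -- e-vector facts
  have hWe : W *ᵥ e = v := by
    funext i
    rw [Matrix.mulVec, dotProduct]
    rw [Finset.sum_eq_single k0]
    · simp [hedef, hvdef]
    · intro b _ hb; simp [hedef, hb]
    · intro h; exact absurd (Finset.mem_univ k0) h
  have hSee : ∀ M : Matrix (Fin n) (Fin n) ℂ, Sfm M e e = M k0 k0 := by
    intro M
    rw [Sfm_apply]
    rw [Finset.sum_eq_single k0]
    · rw [Finset.sum_eq_single k0]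
      · simp [hedef]
      · intro b _ hb; simp [hedef, hb]
      · intro h; exact absurd (Finset.mem_univ k0) h
    · intro b _ hb
      apply Finset.sum_eq_zero; intro l _
      simp [hedef, hb]
    · intro h; exact absurd (Finset.mem_univ k0) h
  have hq : Q k0 k0 = Sfm P v v := by
    rw [← hSee Q, hQdef, Sfm_change, hWe]
  by_cases hcase : a = 0
  · -- degenerate: the diagonal difference vanishes
    have hvz : ∀ i ∈ E, v i = 0 := by
      intro i hi
      have hz : ∑ i ∈ E, Complex.normSq (v i) = 0 := by rw [hEv, hcase]
      have := (Finset.sum_eq_zero_iff_of_nonneg (fun i _ => hnn i)).mp hz i hi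
      exact Complex.normSq_eq_zero.mp this
    have hPQ : Q k0 k0 = P k0 k0 := by
      rw [hq, Sfm_apply]
      rw [Finset.sum_eq_single k0]
      · rw [Finset.sum_eq_single k0]
        · have hα1 : (starRingEnd ℂ) α * α = 1 := by
            rw [mul_comm, Complex.mul_conj]
            have : Complex.normSq α = 1 := by simp only [hadef] at hcase; linarith
            rw [this, Complex.ofReal_one]
          calc (starRingEnd ℂ) (v k0) * P k0 k0 * v k0
              = ((starRingEnd ℂ) α * α) * P k0 k0 := by rw [hvk0]; ring
            _ = P k0 k0 := by rw [hα1, one_mul]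
        · intro b _ hb
          have : v b = 0 := hvz b (Finset.mem_erase.mpr ⟨hb, Finset.mem_univ b⟩)
          rw [this, mul_zero]
        · intro h; exact absurd (Finset.mem_univ k0) h
      · intro b _ hb
        apply Finset.sum_eq_zero; intro l _
        have : v b = 0 := hvz b (Finset.mem_erase.mpr ⟨hb, Finset.mem_univ b⟩)
        rw [this, map_zero, zero_mul, zero_mul]
      · intro h; exact absurd (Finset.mem_univ k0) h
    rw [hPQ, sub_self, map_zero]
    have h1 : 0 ≤ ∑ k ∈ E, ∑ l ∈ E, Complex.normSq (P k l) :=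
      Finset.sum_nonneg fun k _ => Finset.sum_nonneg fun l _ => Complex.normSq_nonneg _
    have h2 : 0 ≤ ∑ k ∈ E, ∑ l ∈ E, Complex.normSq (Q k l) :=
      Finset.sum_nonneg fun k _ => Finset.sum_nonneg fun l _ => Complex.normSq_nonneg _
    linarith
  · have hapos : 0 < a := lt_of_le_of_ne ha0 (Ne.symm hcase)
    set c : ℝ := (Real.sqrt a)⁻¹ with hcdef
    have hc2 : c^2 * a = 1 := by
      rw [hcdef, ← Real.sqrt_inv, Real.sq_sqrt (by positivity)]
      exact inv_mul_cancel₀ (ne_of_gt hapos)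
    have hccast : ((c^2 : ℝ) : ℂ) * ((a : ℝ) : ℂ) = 1 := by
      rw [← Complex.ofReal_mul, hc2, Complex.ofReal_one]
    set w : Fin n → ℂ := (↑c : ℂ) • v + (-(↑c * α)) • e with hwdef
    set r : Fin n → ℂ := fun j => (starRingEnd ℂ) (W k0 j) with hrdef
    set ut : Fin n → ℂ := (↑c : ℂ) • r + (-(↑c * (starRingEnd ℂ) α)) • e with hutdef
    have hcc : (starRingEnd ℂ) ((c : ℂ)) = (c : ℂ) := Complex.conj_ofReal c
    have hαα : (starRingEnd ℂ) α * α = ((Complex.normSq α : ℝ) : ℂ) := by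
      rw [mul_comm, Complex.mul_conj]
    -- X and Y expansions
    set X := Sfm P w w with hXdef
    set Y := Sfm Q ut ut with hYdef
    have EqX : X = ((c^2 : ℝ) : ℂ) * (Sfm P v v - α * Sfm P v e - (starRingEnd ℂ) α * Sfm P e v
        + ((Complex.normSq α : ℝ) : ℂ) * Sfm P e e) := by
      rw [hXdef, hwdef, Sfm_bilin, hcc]
      simp only [map_neg, _root_.map_mul, hcc]
      rw [← hαα]
      push_cast
      ring
    have hWr : W *ᵥ r = e := by
      funext i
      rw [Matrix.mulVec, dotProduct]
      calc ∑ j, W i j * r j = (W * Wᴴ) i k0 := by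
            rw [Matrix.mul_apply]
            apply Finset.sum_congr rfl; intro j _
            simp [hrdef, Matrix.conjTranspose_apply, RCLike.star_def]
        _ = e i := by rw [hW2, Matrix.one_apply]
    have hz : W *ᵥ ut = (↑c : ℂ) • e + (-(↑c * (starRingEnd ℂ) α)) • v := by
      rw [hutdef, Matrix.mulVec_add, Matrix.mulVec_smul, Matrix.mulVec_smul, hWr, hWe]
    have EqY : Y = ((c^2 : ℝ) : ℂ) * (Sfm P e e - (starRingEnd ℂ) α * Sfm P e v - α * Sfm P v e
        + ((Complex.normSq α : ℝ) : ℂ) * Sfm P v v) := by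
      rw [hYdef, hQdef, Sfm_change, hz, Sfm_bilin, hcc]
      simp only [map_neg, _root_.map_mul, hcc, Complex.conj_conj]
      rw [← hαα]
      push_cast
      ring
    have hXY : X - Y = Sfm P v v - Sfm P e e := by
      have hacast : ((a : ℝ) : ℂ) = 1 - ((Complex.normSq α : ℝ) : ℂ) := by
        rw [hadef]; push_cast; ring
      calc X - Y = ((c^2 : ℝ) : ℂ) * (((a : ℝ) : ℂ) * (Sfm P v v - Sfm P e e)) := by
            rw [EqX, EqY, hacast]; ring
        _ = (((c^2 : ℝ) : ℂ) * ((a : ℝ) : ℂ)) * (Sfm P v v - Sfm P e e) := by ring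
        _ = Sfm P v v - Sfm P e e := by rw [hccast, one_mul]
    -- restriction and bounds
    have hwk0 : w k0 = 0 := by
      simp only [hwdef, Pi.add_apply, Pi.smul_apply, smul_eq_mul, hvk0]
      simp [hedef]
    have hutk0 : ut k0 = 0 := by
      simp only [hutdef, Pi.add_apply, Pi.smul_apply, smul_eq_mul, hrdef]
      simp [hedef, hαdef]
    have hrestrict : ∀ (M : Matrix (Fin n) (Fin n) ℂ) (t : Fin n → ℂ), t k0 = 0 →
        Sfm M t t = ∑ k ∈ E, ∑ l ∈ E, (starRingEnd ℂ) (t k) * M k l * t l := by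
      intro M t ht
      rw [Sfm_apply]
      rw [← Finset.sum_erase_add Finset.univ _ (Finset.mem_univ k0)]
      rw [show (∑ l, (starRingEnd ℂ) (t k0) * M k0 l * t l) = 0 from
        Finset.sum_eq_zero fun l _ => by rw [ht, map_zero, zero_mul, zero_mul]]
      rw [add_zero]
      apply Finset.sum_congr rfl; intro k _
      rw [← Finset.sum_erase_add Finset.univ _ (Finset.mem_univ k0)]
      rw [show (starRingEnd ℂ) (t k) * M k k0 * t k0 = 0 by rw [ht, mul_zero], add_zero]
    have hwnorm : ∑ k ∈ E, Complex.normSq (w k) ≤ 1 := by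
      have : ∀ k ∈ E, Complex.normSq (w k) = c^2 * Complex.normSq (v k) := by
        intro k hk
        have hk0 : k ≠ k0 := (Finset.mem_erase.mp hk).1
        simp only [hwdef, Pi.add_apply, Pi.smul_apply, smul_eq_mul]
        rw [show e k = 0 by simp [hedef, hk0]]
        rw [mul_zero, add_zero, Complex.normSq_mul, Complex.normSq_ofReal]
        ring
      rw [Finset.sum_congr rfl this, ← Finset.mul_sum, hEv, hc2]
    have hutnorm : ∑ k ∈ E, Complex.normSq (ut k) ≤ 1 := by
      have : ∀ k ∈ E, Complex.normSq (ut k) = c^2 * Complex.normSq (W k0 k) := by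
        intro k hk
        have hk0 : k ≠ k0 := (Finset.mem_erase.mp hk).1
        simp only [hutdef, Pi.add_apply, Pi.smul_apply, smul_eq_mul]
        rw [show e k = 0 by simp [hedef, hk0]]
        rw [mul_zero, add_zero, Complex.normSq_mul, Complex.normSq_ofReal, hrdef,
          Complex.normSq_conj]
        ring
      rw [Finset.sum_congr rfl this, ← Finset.mul_sum, hEr, hc2]
    have hXb : Complex.normSq X ≤ ∑ k ∈ E, ∑ l ∈ E, Complex.normSq (P k l) := by
      rw [hXdef, hrestrict P w hwk0]
      exact quad_cs E w (fun k l => P k l) hwnorm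
    have hYb : Complex.normSq Y ≤ ∑ k ∈ E, ∑ l ∈ E, Complex.normSq (Q k l) := by
      rw [hYdef, hrestrict Q ut hutk0]
      exact quad_cs E ut (fun k l => Q k l) hutnorm
    -- conclude
    have hfinal : P k0 k0 - Q k0 k0 = Y - X := by
      rw [hq, ← hSee P, show Y - X = -(X - Y) by ring, hXY]
      ring
    rw [hfinal]
    calc Complex.normSq (Y - X) ≤ 2 * (Complex.normSq Y + Complex.normSq X) := nsq_sub_le Y X
      _ ≤ 2 * ((∑ k ∈ E, ∑ l ∈ E, Complex.normSq (P k l))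
            + (∑ k ∈ E, ∑ l ∈ E, Complex.normSq (Q k l))) := by linarith

lemma nsq_cs (a b : ℝ) (z q : ℂ) :
    Complex.normSq ((a:ℂ) * z - (b:ℂ) * q) ≤ (b^2 + a^2) * (Complex.normSq z + Complex.normSq q) := by
  simp only [Complex.normSq_apply, Complex.sub_re, Complex.sub_im, Complex.mul_re, Complex.mul_im,
    Complex.ofReal_re, Complex.ofReal_im]
  nlinarith [sq_nonneg (a * q.re + b * z.re), sq_nonneg (a * q.im + b * z.im),
    sq_nonneg (a * q.re - b * z.re), sq_nonneg (a * q.im - b * z.im)]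

lemma core {n : ℕ} (P W : Matrix (Fin n) (Fin n) ℂ) (hW1 : Wᴴ * W = 1) (hW2 : W * Wᴴ = 1)
    (σ : Fin n → ℝ) (hσ : ∀ k, 0 ≤ σ k) :
    ∑ k, ∑ l, Complex.normSq ((σ l : ℂ) * P k l - (σ k : ℂ) * (Wᴴ * P * W) k l)
      ≤ (∑ k, σ k ^ 2) *
        ((∑ k, ∑ l, Complex.normSq (P k l)) + (∑ k, ∑ l, Complex.normSq ((Wᴴ * P * W) k l))) := by
  classical
  rcases isEmpty_or_nonempty (Fin n) with hE | hNE
  · simp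
  obtain ⟨k0, -, hk0⟩ := Finset.exists_max_image Finset.univ σ ⟨Classical.arbitrary (Fin n), Finset.mem_univ _⟩
  set Q := Wᴴ * P * W with hQdef
  set E := Finset.univ.erase k0 with hEdef
  set S := ∑ k, σ k ^ 2 with hSdef
  set m := σ k0 ^ 2 with hmdef
  have hknn : ∀ k, 0 ≤ σ k ^ 2 := fun k => sq_nonneg _
  have hmS : ∑ k ∈ E, σ k ^ 2 = S - m := by
    have h := Finset.sum_erase_add Finset.univ (fun k => σ k ^ 2) (Finset.mem_univ k0)
    simp only [hEdef, hSdef, hmdef]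
    linarith [h]
  have hSm : m ≤ S := by
    have : 0 ≤ ∑ k ∈ E, σ k ^ 2 := Finset.sum_nonneg fun k _ => hknn k
    linarith [hmS]
  have hsq_le : ∀ k, σ k ^ 2 ≤ m := by
    intro k
    have := hk0 k (Finset.mem_univ k)
    exact pow_le_pow_left₀ (hσ k) this 2
  have hEle : ∀ k, k ≠ k0 → σ k ^ 2 ≤ S - m := by
    intro k hk
    rw [← hmS]
    exact Finset.single_le_sum (fun j _ => hknn j) (by simp [hEdef, hk])
  -- entrywise data
  set t : Fin n → Fin n → ℝ := fun k l => Complex.normSq (P k l) + Complex.normSq (Q k l) with htdef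
  have htnn : ∀ k l, 0 ≤ t k l := fun k l =>
    add_nonneg (Complex.normSq_nonneg _) (Complex.normSq_nonneg _)
  set F : Fin n → Fin n → ℝ :=
    fun k l => Complex.normSq ((σ l : ℂ) * P k l - (σ k : ℂ) * Q k l) with hFdef
  have hFt : ∀ k l, F k l ≤ (σ k ^ 2 + σ l ^ 2) * t k l := fun k l => nsq_cs (σ l) (σ k) (P k l) (Q k l)
  have hFS : ∀ k l, (k, l) ≠ (k0, k0) → F k l ≤ S * t k l := by
    intro k l hkl
    refine le_trans (hFt k l) (mul_le_mul_of_nonneg_right ?_ (htnn k l))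
    by_cases hk : k = k0
    · have hl : l ≠ k0 := by rintro rfl; exact hkl (by rw [hk])
      calc σ k ^ 2 + σ l ^ 2 ≤ m + (S - m) := add_le_add (hsq_le k) (hEle l hl)
        _ = S := by ring
    · calc σ k ^ 2 + σ l ^ 2 ≤ (S - m) + m := add_le_add (hEle k hk) (hsq_le l)
        _ = S := by ring
  have hFblock : ∀ k l, k ≠ k0 → l ≠ k0 → F k l ≤ (2 * (S - m)) * t k l := by
    intro k l hk hl
    refine le_trans (hFt k l) (mul_le_mul_of_nonneg_right ?_ (htnn k l))
    have := hEle k hk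
    have := hEle l hl
    linarith
  -- decomposition of double sums
  have hdec : ∀ (G : Fin n → Fin n → ℝ), (∑ k, ∑ l, G k l)
      = (∑ k ∈ E, ∑ l ∈ E, G k l) + ((∑ k ∈ E, G k k0) + (∑ l ∈ E, G k0 l) + G k0 k0) := by
    intro G
    rw [← Finset.sum_erase_add Finset.univ _ (Finset.mem_univ k0)]
    rw [show (∑ l, G k0 l) = (∑ l ∈ E, G k0 l) + G k0 k0 from
      (Finset.sum_erase_add Finset.univ _ (Finset.mem_univ k0)).symm]
    rw [show (∑ k ∈ E, ∑ l, G k l) = ∑ k ∈ E, ((∑ l ∈ E, G k l) + G k k0) from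
      Finset.sum_congr rfl fun k _ => (Finset.sum_erase_add Finset.univ _ (Finset.mem_univ k0)).symm]
    rw [Finset.sum_add_distrib]
    ring
  set T22 := ∑ k ∈ E, ∑ l ∈ E, t k l with hT22def
  have hT22nn : 0 ≤ T22 :=
    Finset.sum_nonneg fun k _ => Finset.sum_nonneg fun l _ => htnn k l
  have hmixed1 : ∑ k ∈ E, F k k0 ≤ S * ∑ k ∈ E, t k k0 := by
    rw [Finset.mul_sum]
    apply Finset.sum_le_sum
    intro k hk
    exact hFS k k0 (by simp [Prod.ext_iff, (Finset.mem_erase.mp hk).1])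
  have hmixed2 : ∑ l ∈ E, F k0 l ≤ S * ∑ l ∈ E, t k0 l := by
    rw [Finset.mul_sum]
    apply Finset.sum_le_sum
    intro l hl
    exact hFS k0 l (by simp [Prod.ext_iff, (Finset.mem_erase.mp hl).1])
  -- diagonal term
  have hdiagF : F k0 k0 = m * Complex.normSq (P k0 k0 - Q k0 k0) := by
    simp only [hFdef, hmdef]
    rw [show (σ k0 : ℂ) * P k0 k0 - (σ k0 : ℂ) * Q k0 k0 = (σ k0 : ℂ) * (P k0 k0 - Q k0 k0) by ring]
    rw [Complex.normSq_mul, Complex.normSq_ofReal]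
    ring
  have hdd2t : Complex.normSq (P k0 k0 - Q k0 k0) ≤ 2 * t k0 k0 := by
    have := nsq_sub_le (P k0 k0) (Q k0 k0)
    simp only [htdef]
    linarith
  have hddT : Complex.normSq (P k0 k0 - Q k0 k0) ≤ 2 * T22 := by
    have h := claim3 P W hW1 hW2 k0
    have he : T22 = (∑ k ∈ E, ∑ l ∈ E, Complex.normSq (P k l))
        + (∑ k ∈ E, ∑ l ∈ E, Complex.normSq (Q k l)) := by
      simp only [hT22def, htdef, Finset.sum_add_distrib]
    rw [he]
    exact h
  have hblock : ∑ k ∈ E, ∑ l ∈ E, F k l ≤ (2 * (S - m)) * T22 := by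
    rw [hT22def, Finset.mul_sum]
    apply Finset.sum_le_sum; intro k hk
    rw [Finset.mul_sum]
    apply Finset.sum_le_sum; intro l hl
    exact hFblock k l (Finset.mem_erase.mp hk).1 (Finset.mem_erase.mp hl).1
  have hblockS : ∑ k ∈ E, ∑ l ∈ E, F k l ≤ S * T22 := by
    rw [hT22def, Finset.mul_sum]
    apply Finset.sum_le_sum; intro k hk
    rw [Finset.mul_sum]
    apply Finset.sum_le_sum; intro l hl
    exact hFS k l (by simp [Prod.ext_iff, (Finset.mem_erase.mp hk).1])
  have hbudget : (∑ k, σ k ^ 2) *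
      ((∑ k, ∑ l, Complex.normSq (P k l)) + (∑ k, ∑ l, Complex.normSq (Q k l)))
      = S * ((∑ k ∈ E, ∑ l ∈ E, t k l) + ((∑ k ∈ E, t k k0) + (∑ l ∈ E, t k0 l) + t k0 k0)) := by
    rw [← hdec t, ← hSdef]
    congr 1
    simp only [htdef, Finset.sum_add_distrib]
  rw [show (∑ k, ∑ l, Complex.normSq ((σ l : ℂ) * P k l - (σ k : ℂ) * Q k l)) = ∑ k, ∑ l, F k l
    from rfl]
  rw [hdec F, hbudget]
  have hSnn : 0 ≤ S := Finset.sum_nonneg fun k _ => hknn k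
  rcases le_or_gt (2 * m) S with hm | hm
  · -- top weight small
    have hdiag : F k0 k0 ≤ S * t k0 k0 := by
      rw [hdiagF]
      calc m * Complex.normSq (P k0 k0 - Q k0 k0) ≤ m * (2 * t k0 k0) :=
            mul_le_mul_of_nonneg_left hdd2t (by rw [hmdef]; positivity)
        _ = (2 * m) * t k0 k0 := by ring
        _ ≤ S * t k0 k0 := mul_le_mul_of_nonneg_right hm (htnn k0 k0)
    nlinarith [hblockS, hmixed1, hmixed2, hdiag]
  · -- top weight dominant
    have hdiag : F k0 k0 ≤ S * t k0 k0 + (2 * m - S) * T22 := by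
      rw [hdiagF]
      have h1 : m * Complex.normSq (P k0 k0 - Q k0 k0)
          = (S/2) * Complex.normSq (P k0 k0 - Q k0 k0)
            + (m - S/2) * Complex.normSq (P k0 k0 - Q k0 k0) := by ring
      rw [h1]
      have h2 : (S/2) * Complex.normSq (P k0 k0 - Q k0 k0) ≤ (S/2) * (2 * t k0 k0) :=
        mul_le_mul_of_nonneg_left hdd2t (by linarith [hSnn])
      have h3 : (m - S/2) * Complex.normSq (P k0 k0 - Q k0 k0) ≤ (m - S/2) * (2 * T22) :=
        mul_le_mul_of_nonneg_left hddT (by linarith)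
      linarith
    nlinarith [hblock, hmixed1, hmixed2, hdiag]

local notation "⟪" x ", " y "⟫" => @inner ℂ _ _ x y

lemma exists_svd {n : ℕ} (B : Matrix (Fin n) (Fin n) ℂ) :
    ∃ (U V : Matrix (Fin n) (Fin n) ℂ) (σ : Fin n → ℝ),
      Uᴴ * U = 1 ∧ Vᴴ * V = 1 ∧ (∀ k, 0 ≤ σ k) ∧
      B = U * Matrix.diagonal (fun k => (σ k : ℂ)) * Vᴴ := by
  classical
  have hH : (Bᴴ * B).IsHermitian := Matrix.isHermitian_conjTranspose_mul_self B
  set V : Matrix (Fin n) (Fin n) ℂ := (Matrix.IsHermitian.eigenvectorUnitary hH : Matrix (Fin n) (Fin n) ℂ) with hVdef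
  obtain ⟨hV1', hV2'⟩ := Unitary.mem_iff.mp (Matrix.IsHermitian.eigenvectorUnitary hH).2
  have hV1 : Vᴴ * V = 1 := by rw [← Matrix.star_eq_conjTranspose]; exact hV1'
  have hV2 : V * Vᴴ = 1 := by rw [← Matrix.star_eq_conjTranspose]; exact hV2'
  set e : Fin n → ℝ := hH.eigenvalues with hedef
  have he : ∀ i, 0 ≤ e i := fun i => Matrix.eigenvalues_conjTranspose_mul_self_nonneg B i
  set σ : Fin n → ℝ := fun k => Real.sqrt (e k) with hσdef
  have hσ : ∀ k, 0 ≤ σ k := fun k => Real.sqrt_nonneg _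
  have hσ2 : ∀ k, σ k ^ 2 = e k := fun k => Real.sq_sqrt (he k)
  have hspec : Bᴴ * B = V * Matrix.diagonal (fun k => ((e k : ℝ) : ℂ)) * Vᴴ := by
    have h := hH.spectral_theorem
    rw [← Matrix.star_eq_conjTranspose]
    exact h
  set M : Matrix (Fin n) (Fin n) ℂ := B * V with hMdef
  have hMM : Mᴴ * M = Matrix.diagonal (fun k => ((e k : ℝ) : ℂ)) := by
    have h1 : Mᴴ * M = Vᴴ * (Bᴴ * B) * V := by
      rw [hMdef, Matrix.conjTranspose_mul]
      simp only [Matrix.mul_assoc]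
    rw [h1, hspec]
    calc Vᴴ * (V * Matrix.diagonal (fun k => ((e k : ℝ) : ℂ)) * Vᴴ) * V
        = (Vᴴ * V) * Matrix.diagonal (fun k => ((e k : ℝ) : ℂ)) * (Vᴴ * V) := by
          simp only [Matrix.mul_assoc]
      _ = _ := by rw [hV1, Matrix.one_mul, Matrix.mul_one]
  set mcol : Fin n → EuclideanSpace ℂ (Fin n) := fun k => (WithLp.equiv 2 _).symm (fun i => M i k)
    with hmcoldef
  have hinner : ∀ k l, ⟪mcol k, mcol l⟫ = Matrix.diagonal (fun k => ((e k : ℝ) : ℂ)) k l := by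
    intro k l
    rw [← hMM, Matrix.mul_apply, PiLp.inner_apply]
    apply Finset.sum_congr rfl; intro i _
    rw [Matrix.conjTranspose_apply, RCLike.inner_apply, RCLike.star_def]
    exact mul_comm _ _
  set s : Set (Fin n) := {k | e k ≠ 0} with hsdef
  set u0 : Fin n → EuclideanSpace ℂ (Fin n) := fun k => (((σ k)⁻¹ : ℝ) : ℂ) • mcol k with hu0def
  have hON : Orthonormal ℂ (s.restrict u0) := by
    rw [orthonormal_iff_ite]
    rintro ⟨k, hk⟩ ⟨l, hl⟩
    change ⟪u0 k, u0 l⟫ = _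
    rw [hu0def]
    simp only [inner_smul_left, inner_smul_right]
    rw [hinner k l, Complex.conj_ofReal]
    by_cases hkl : k = l
    · subst hkl
      rw [if_pos (Subtype.ext rfl), Matrix.diagonal_apply_eq]
      have hσne : σ k ≠ 0 := by
        intro h0
        apply hk
        rw [← hσ2 k, h0]; ring
      have hr : ((σ k)⁻¹ : ℝ) * ((σ k)⁻¹ * e k) = 1 := by
        rw [← hσ2 k]
        field_simp
      rw [← Complex.ofReal_mul, ← Complex.ofReal_mul, hr, Complex.ofReal_one]
    · rw [Matrix.diagonal_apply_ne _ hkl]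
      rw [if_neg (by simp [Subtype.ext_iff, hkl])]
      simp
  obtain ⟨b, hb⟩ := hON.exists_orthonormalBasis_extension_of_card_eq
    (by rw [finrank_euclideanSpace, Fintype.card_fin])
  set U : Matrix (Fin n) (Fin n) ℂ := Matrix.of (fun i k => b k i) with hUdef
  have hU1 : Uᴴ * U = 1 := by
    ext k l
    rw [Matrix.mul_apply, Matrix.one_apply]
    have hbkl := orthonormal_iff_ite.mp b.orthonormal k l
    calc ∑ i, Uᴴ k i * U i l = ⟪b k, b l⟫ := by
          rw [PiLp.inner_apply]
          apply Finset.sum_congr rfl; intro i _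
          rw [Matrix.conjTranspose_apply, RCLike.inner_apply, RCLike.star_def]
          exact mul_comm _ _
      _ = _ := by rw [hbkl]
  have hMzero : ∀ k, e k = 0 → ∀ i, M i k = 0 := by
    intro k hek i
    have h0 : ⟪mcol k, mcol k⟫ = 0 := by
      rw [hinner k k, Matrix.diagonal_apply_eq, hek, Complex.ofReal_zero]
    have := inner_self_eq_zero.mp h0
    have happ := congrFun (congrArg (WithLp.equiv 2 (Fin n → ℂ)) this) i
    simpa [hmcoldef] using happ
  have hMcol : ∀ i k, M i k = (σ k : ℂ) * b k i := by
    intro i k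
    by_cases hk : e k = 0
    · rw [hMzero k hk i]
      rw [show σ k = 0 by rw [hσdef]; simp [hk], Complex.ofReal_zero, zero_mul]
    · have hkmem : k ∈ s := hk
      have hbk := hb k hkmem
      rw [hbk, hu0def]
      have happ : ((fun k => (((σ k)⁻¹ : ℝ) : ℂ) • mcol k) k) i = (((σ k)⁻¹ : ℝ) : ℂ) * M i k := rfl
      rw [happ]
      have hσne : (σ k : ℝ) ≠ 0 := by
        intro h0; apply hk; rw [← hσ2 k, h0]; ring
      have hσnec : ((σ k : ℝ) : ℂ) ≠ 0 := by exact_mod_cast hσne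
      rw [← mul_assoc, ← Complex.ofReal_mul, mul_inv_cancel₀ hσne, Complex.ofReal_one, one_mul]
  refine ⟨U, V, σ, hU1, hV1, hσ, ?_⟩
  have hUD : U * Matrix.diagonal (fun k => (σ k : ℂ)) = M := by
    ext i k
    rw [Matrix.mul_diagonal, hMcol i k, hUdef]
    rw [Matrix.of_apply]
    ring
  calc B = B * (V * Vᴴ) := by rw [hV2, Matrix.mul_one]
    _ = M * Vᴴ := by rw [hMdef, Matrix.mul_assoc]
    _ = U * Matrix.diagonal (fun k => (σ k : ℂ)) * Vᴴ := by rw [hUD]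



end BWaux

open BWaux in
/-- Böttcher–Wenzel inequality. -/
theorem bottcher_wenzel {n : ℕ} (A B : Matrix (Fin n) (Fin n) ℂ) :
    frobSq (A * B - B * A) ≤ 2 * frobSq A * frobSq B := by
  obtain ⟨U, V, σ, hU1, hV1, hσ, hB⟩ := exists_svd B
  have hU2 : U * Uᴴ = 1 := mul_eq_one_comm.mp hU1
  have hV2 : V * Vᴴ = 1 := mul_eq_one_comm.mp hV1
  set D : Matrix (Fin n) (Fin n) ℂ := Matrix.diagonal (fun k => (σ k : ℂ)) with hDdef
  set P := Uᴴ * A * U with hPdef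
  set W := Uᴴ * V with hWdef
  have hW1 : Wᴴ * W = 1 := by
    rw [hWdef, Matrix.conjTranspose_mul, Matrix.conjTranspose_conjTranspose]
    calc Vᴴ * U * (Uᴴ * V) = Vᴴ * (U * Uᴴ) * V := by simp only [Matrix.mul_assoc]
      _ = 1 := by rw [hU2, Matrix.mul_one, hV1]
  have hW2 : W * Wᴴ = 1 := mul_eq_one_comm.mp hW1
  have hQ : Wᴴ * P * W = Vᴴ * A * V := by
    rw [hWdef, hPdef, Matrix.conjTranspose_mul, Matrix.conjTranspose_conjTranspose]
    calc Vᴴ * U * (Uᴴ * A * U) * (Uᴴ * V)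
        = Vᴴ * (U * Uᴴ) * A * ((U * Uᴴ) * V) := by simp only [Matrix.mul_assoc]
      _ = Vᴴ * A * V := by rw [hU2, Matrix.mul_one, Matrix.one_mul]
  have e1 : Uᴴ * (A * (U * D * Vᴴ)) * V = P * D := by
    calc Uᴴ * (A * (U * D * Vᴴ)) * V = Uᴴ * A * U * D * (Vᴴ * V) := by
          simp only [Matrix.mul_assoc]
      _ = P * D := by rw [hV1, Matrix.mul_one, hPdef]
  have e2 : Uᴴ * (U * D * Vᴴ * A) * V = D * (Vᴴ * A * V) := by
    calc Uᴴ * (U * D * Vᴴ * A) * V = Uᴴ * U * (D * (Vᴴ * A * V)) := by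
          simp only [Matrix.mul_assoc]
      _ = D * (Vᴴ * A * V) := by rw [hU1, Matrix.one_mul]
  have hkey : Uᴴ * (A * B - B * A) * V = P * D - D * (Vᴴ * A * V) := by
    rw [hB, Matrix.mul_sub, Matrix.sub_mul, e1, e2]
  have hfrob : frobSq (A * B - B * A)
      = ∑ k, ∑ l, Complex.normSq ((σ l : ℂ) * P k l - (σ k : ℂ) * (Wᴴ * P * W) k l) := by
    rw [← frobSq_unitary (A * B - B * A) U V hU2 hV2, hkey, ← hQ, frobSq_eq]
    apply Finset.sum_congr rfl; intro k _
    apply Finset.sum_congr rfl; intro l _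
    rw [Matrix.sub_apply, Matrix.mul_diagonal, Matrix.diagonal_mul, mul_comm (P k l) _]
  have hPfrob : (∑ k, ∑ l, Complex.normSq (P k l)) = frobSq A := by
    rw [← frobSq_eq, hPdef]
    exact frobSq_unitary A U U hU2 hU2
  have hQfrob : (∑ k, ∑ l, Complex.normSq ((Wᴴ * P * W) k l)) = frobSq A := by
    rw [← frobSq_eq, hQ]
    exact frobSq_unitary A V V hV2 hV2
  have hσB : (∑ k, σ k ^ 2) = frobSq B := by
    have h1 : Uᴴ * B * V = D := by
      rw [hB]
      calc Uᴴ * (U * D * Vᴴ) * V = Uᴴ * U * D * (Vᴴ * V) := by simp only [Matrix.mul_assoc]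
        _ = D := by rw [hU1, hV1, Matrix.one_mul, Matrix.mul_one]
    have h2 : frobSq B = frobSq D := by rw [← frobSq_unitary B U V hU2 hV2, h1]
    rw [h2, frobSq_eq]
    apply Finset.sum_congr rfl; intro k _
    rw [Finset.sum_eq_single k]
    · rw [hDdef, Matrix.diagonal_apply_eq, Complex.normSq_ofReal]
      ring
    · intro l _ hl
      rw [hDdef, Matrix.diagonal_apply_ne' _ hl, map_zero]
    · intro h; exact absurd (Finset.mem_univ k) h
  have hcore := core P W hW1 hW2 σ hσ
  rw [hPfrob, hQfrob, hσB] at hcore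
  rw [hfrob]
  calc (∑ k, ∑ l, Complex.normSq ((σ l : ℂ) * P k l - (σ k : ℂ) * (Wᴴ * P * W) k l))
      ≤ frobSq B * (frobSq A + frobSq A) := hcore
    _ = 2 * frobSq A * frobSq B := by ring
end

section
/- Let A, C be m×1 complex column vectors and B a 1×m complex row vector. Then ‖ABC − CBA‖_F² ≤ (‖B‖_F²/2)·‖A⊗C − C⊗A‖_F² = ‖B‖_F²(‖A‖_F²‖C‖_F² − |⟨A,C⟩|²). -/
open Matrix Kronecker BigOperators ComplexConjugate Finset

lemma cs_normSq {m : ℕ} (x y : Fin m → ℂ) :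
    Complex.normSq (∑ j, x j * y j) ≤ (∑ j, Complex.normSq (x j)) * (∑ j, Complex.normSq (y j)) := by
  have h1 : ‖∑ j, x j * y j‖ ≤ ∑ j, ‖x j‖ * ‖y j‖ := by
    refine (norm_sum_le _ _).trans_eq ?_
    exact Finset.sum_congr rfl fun j _ => norm_mul _ _
  have h2 := Finset.sum_mul_sq_le_sq_mul_sq Finset.univ
    (fun j => ‖x j‖) (fun j => ‖y j‖)
  calc Complex.normSq (∑ j, x j * y j) = ‖∑ j, x j * y j‖ ^ 2 :=
        (Complex.sq_norm _).symm
    _ ≤ (∑ j, ‖x j‖ * ‖y j‖) ^ 2 :=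
        pow_le_pow_left₀ (norm_nonneg _) h1 2
    _ ≤ (∑ j, ‖x j‖ ^ 2) * (∑ j, ‖y j‖ ^ 2) := h2
    _ = _ := by simp [Complex.sq_norm]


theorem gbw_vector_kron {m : ℕ} (A C : Matrix (Fin m) (Fin 1) ℂ) (B : Matrix (Fin 1) (Fin m) ℂ) :
    frobSq (A * B * C - C * B * A) ≤ frobSq B / 2 * frobSq (A ⊗ₖ C - C ⊗ₖ A) ∧
    frobSq B / 2 * frobSq (A ⊗ₖ C - C ⊗ₖ A)
      = frobSq B * (frobSq A * frobSq C - ‖Matrix.trace (A * Cᴴ)‖ ^ 2) := by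
  classical

  classical
  set a : Fin m → ℂ := fun i => A i 0 with ha
  set c : Fin m → ℂ := fun i => C i 0 with hc
  set b : Fin m → ℂ := fun j => B 0 j with hb
  set S : ℂ := ∑ i, a i * conj (c i) with hS
  set na : ℝ := ∑ i, Complex.normSq (a i) with hna
  set nc : ℝ := ∑ i, Complex.normSq (c i) with hnc
  set nb : ℝ := ∑ j, Complex.normSq (b j) with hnb
  have hfA : frobSq A = na := by
    simp [frobSq, Complex.sq_norm, hna, ha]
  have hfC : frobSq C = nc := by
    simp [frobSq, Complex.sq_norm, hnc, hc]
  have hfB : frobSq B = nb := by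
    simp [frobSq, Complex.sq_norm, hnb, hb]
  have htr : Matrix.trace (A * Cᴴ) = S := by
    simp [Matrix.trace, Matrix.diag, Matrix.mul_apply, hS, ha, hc]
  have hK : frobSq (A ⊗ₖ C - C ⊗ₖ A) = 2*(na*nc - Complex.normSq S) := by
    have h1 : frobSq (A ⊗ₖ C - C ⊗ₖ A)
        = ∑ i, ∑ j, Complex.normSq (a i * c j - c i * a j) := by
      simp only [frobSq, Complex.sq_norm, Fintype.sum_prod_type]
      simp [Matrix.sub_apply, ha, hc, mul_comm]
    rw [h1]
    have h2 : ∀ i j : Fin m, Complex.normSq (a i * c j - c i * a j)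
        = Complex.normSq (a i) * Complex.normSq (c j)
          + Complex.normSq (c i) * Complex.normSq (a j)
          - 2 * ((a i * conj (c i)) * (c j * conj (a j))).re := by
      intro i j
      have hcr : a i * c j * conj (c i * a j)
          = (a i * conj (c i)) * (c j * conj (a j)) := by
        simp only [_root_.map_mul]; ring
      rw [Complex.normSq_sub, Complex.normSq_mul, Complex.normSq_mul, hcr]
    calc ∑ i, ∑ j, Complex.normSq (a i * c j - c i * a j)
        = ∑ i, ∑ j, (Complex.normSq (a i) * Complex.normSq (c j)
          + Complex.normSq (c i) * Complex.normSq (a j)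
          - 2 * ((a i * conj (c i)) * (c j * conj (a j))).re) :=
          Finset.sum_congr rfl fun i _ => Finset.sum_congr rfl fun j _ => h2 i j
      _ = 2*(na*nc - Complex.normSq S) := by
          have e1 : ∑ i, ∑ j, Complex.normSq (a i) * Complex.normSq (c j) = na * nc := by
            rw [hna, hnc, Finset.sum_mul_sum]
          have e2 : ∑ i, ∑ j, Complex.normSq (c i) * Complex.normSq (a j) = nc * na := by
            rw [hna, hnc, Finset.sum_mul_sum]
          have e4 : (∑ i, ∑ j, (a i * conj (c i)) * (c j * conj (a j))) = S * conj S := by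
            rw [hS, map_sum, Finset.sum_mul_sum]
            refine Finset.sum_congr rfl fun i _ => Finset.sum_congr rfl fun j _ => ?_
            simp only [_root_.map_mul, Complex.conj_conj]
            ring
          have e3 : ∑ i, ∑ j, ((a i * conj (c i)) * (c j * conj (a j))).re
              = Complex.normSq S := by
            have e5 : Complex.normSq S = (S * conj S).re := by
              rw [Complex.mul_conj]; simp
            rw [e5, ← e4]
            simp only [Complex.re_sum]
          simp only [Finset.sum_sub_distrib, Finset.sum_add_distrib, ← Finset.mul_sum]
          simp only [← hna, ← hnc, ← Finset.sum_mul]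
          rw [e3]
          ring
  have ha' : ∀ i, A i 0 = a i := fun _ => rfl
  have hc' : ∀ i, C i 0 = c i := fun _ => rfl
  have hb' : ∀ j, B 0 j = b j := fun _ => rfl
  set α : ℂ := ∑ j, b j * c j with hα
  set β : ℂ := ∑ j, b j * a j with hβ
  have hentry : ∀ i : Fin m, (A*B*C - C*B*A) i 0 = α * a i - β * c i := by
    intro i
    simp only [Matrix.sub_apply, Matrix.mul_apply, Fin.sum_univ_one, hα, hβ, Finset.sum_mul]
    rw [← Finset.sum_sub_distrib, ← Finset.sum_sub_distrib]
    refine Finset.sum_congr rfl fun k _ => ?_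
    simp only [ha', hb', hc']
    ring
  set L : ℝ := Complex.normSq α * na + Complex.normSq β * nc
      - 2 * (α * conj β * S).re with hLdef
  have hL : frobSq (A*B*C - C*B*A) = L := by
    have hL1 : frobSq (A*B*C - C*B*A) = ∑ i, Complex.normSq (α * a i - β * c i) := by
      simp only [frobSq, Complex.sq_norm, Fin.sum_univ_one]
      exact Finset.sum_congr rfl fun i _ => by rw [hentry i]
    rw [hL1]
    calc ∑ i, Complex.normSq (α * a i - β * c i)
        = ∑ i, (Complex.normSq α * Complex.normSq (a i)
            + Complex.normSq β * Complex.normSq (c i)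
            - 2 * ((α * conj β) * (a i * conj (c i))).re) := by
          refine Finset.sum_congr rfl fun i _ => ?_
          have hcr : α * a i * conj (β * c i) = (α * conj β) * (a i * conj (c i)) := by
            simp only [_root_.map_mul]; ring
          rw [Complex.normSq_sub, Complex.normSq_mul, Complex.normSq_mul, hcr]
      _ = L := by
          have e6 : (α * conj β * S).re
              = ∑ i, ((α * conj β) * (a i * conj (c i))).re := by
            rw [hS, Finset.mul_sum, Complex.re_sum]
          simp only [Finset.sum_sub_distrib, Finset.sum_add_distrib, ← Finset.mul_sum]
          rw [← hna, ← hnc, ← e6, hLdef]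
  set G : ℝ := na * nc - Complex.normSq S with hGdef
  have hG0 : 0 ≤ G := by
    have h := cs_normSq a (fun i => conj (c i))
    simp only [Complex.normSq_conj] at h
    rw [← hS, ← hna, ← hnc] at h
    rw [hGdef]; linarith
  have hnb0 : 0 ≤ nb := by
    rw [hnb]; exact Finset.sum_nonneg fun j _ => Complex.normSq_nonneg _
  set u : ℂ := (na:ℂ) * conj α - S * conj β with hu
  set v : ℂ := - conj S * conj α + (nc:ℂ) * conj β with hv
  have hnaC : ((na:ℝ):ℂ) = ∑ i, a i * conj (a i) := by
    rw [hna]; push_cast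
    exact Finset.sum_congr rfl fun i _ => (Complex.mul_conj _).symm
  have hncC : ((nc:ℝ):ℂ) = ∑ i, c i * conj (c i) := by
    rw [hnc]; push_cast
    exact Finset.sum_congr rfl fun i _ => (Complex.mul_conj _).symm
  have hz : (((α * conj β * S).re : ℝ) : ℂ)
      = (α * conj β * S + conj (α * conj β * S)) / 2 := by
    rw [Complex.add_conj]; push_cast; ring
  have key1 : u * α + v * β = (L:ℂ) := by
    rw [hLdef]; push_cast
    rw [hz, ← Complex.mul_conj, ← Complex.mul_conj]
    simp only [hu, hv, _root_.map_mul, Complex.conj_conj]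
    ring
  have key2 : ∑ j, b j * (u * c j + v * a j) = u * α + v * β := by
    simp only [mul_add, Finset.sum_add_distrib]
    rw [hα, hβ, Finset.mul_sum, Finset.mul_sum]
    congr 1
    · exact Finset.sum_congr rfl fun j _ => by ring
    · exact Finset.sum_congr rfl fun j _ => by ring
  have key3 : ∑ j, Complex.normSq (u * c j + v * a j) = G * L := by
    have hc1 : ((∑ j, Complex.normSq (u * c j + v * a j) : ℝ) : ℂ)
        = ∑ j, (u * c j + v * a j) * conj (u * c j + v * a j) := by
      push_cast
      exact Finset.sum_congr rfl fun j _ => (Complex.mul_conj _).symm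
    have hc2 : ∑ j, (u * c j + v * a j) * conj (u * c j + v * a j)
        = (u * conj u) * (∑ j, c j * conj (c j)) + (u * conj v) * (∑ j, c j * conj (a j))
          + (v * conj u) * (∑ j, a j * conj (c j)) + (v * conj v) * (∑ j, a j * conj (a j)) := by
      simp only [Finset.mul_sum, ← Finset.sum_add_distrib]
      refine Finset.sum_congr rfl fun j _ => ?_
      simp only [map_add, _root_.map_mul]
      ring
    have hsca : ∑ j, c j * conj (a j) = conj S := by
      rw [hS, map_sum]
      refine Finset.sum_congr rfl fun j _ => ?_
      simp only [_root_.map_mul, Complex.conj_conj]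
      ring
    have hmain : ((∑ j, Complex.normSq (u * c j + v * a j) : ℝ) : ℂ) = ((G * L : ℝ) : ℂ) := by
      rw [hc1, hc2, hsca, ← hS, ← hnaC, ← hncC]
      push_cast
      rw [hGdef, hLdef]
      push_cast
      rw [hz, ← Complex.mul_conj α, ← Complex.mul_conj β, ← Complex.mul_conj S]
      simp only [hu, hv, map_sub, map_add, map_neg, _root_.map_mul, Complex.conj_conj,
        Complex.conj_ofReal]
      ring
    exact_mod_cast hmain
  have hfin : L * L ≤ nb * (G * L) := by
    have hcs := cs_normSq b (fun j => u * c j + v * a j)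
    rw [key2, key1, ← hnb, key3, Complex.normSq_ofReal] at hcs
    exact hcs
  have hLG : L ≤ nb * G := by
    rcases le_or_gt L 0 with h|h
    · exact h.trans (mul_nonneg hnb0 hG0)
    · nlinarith [hfin]
  constructor
  · rw [hL, hfB, hK]
    calc L ≤ nb * G := hLG
      _ = nb / 2 * (2 * G) := by ring
  · rw [hfB, hK, hfA, hfC, htr, Complex.sq_norm, hGdef]
    ring
end

section
/- Let A, C be m×n complex matrices and define K = Cᵀ⊗A − Aᵀ⊗C (an mn×mn matrix). Then every positive eigenvalue of K*K has geometric multiplicity at least 2. -/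
open Matrix Kronecker BigOperators

theorem K_eigen_mult_two {m n : ℕ} (A C : Matrix (Fin m) (Fin n) ℂ)
    (K : Matrix (Fin n × Fin m) (Fin m × Fin n) ℂ) (hK : K = Cᵀ ⊗ₖ A - Aᵀ ⊗ₖ C)
    (μ : ℝ) (hμ : 0 < μ)
    (hE : Module.End.HasEigenvalue (Matrix.toLin' (Kᴴ * K)) (μ : ℂ)) :
    2 ≤ Module.finrank ℂ (Module.End.eigenspace (Matrix.toLin' (Kᴴ * K)) (μ : ℂ)) := by
  classical
  obtain ⟨v, hv⟩ := hE.exists_hasEigenvector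
  have hv0 : v ≠ 0 := hv.right
  have hvE : (Kᴴ * K) *ᵥ v = (μ:ℂ) • v := by
    have h := hv.apply_eq_smul
    rwa [Matrix.toLin'_apply] at h
  have hanti : ∀ (a : Fin n) (b : Fin m) (c : Fin m) (d : Fin n),
      K (a,b) (c,d) = - K (d,c) (b,a) := by
    intro a b c d
    subst hK
    simp only [Matrix.sub_apply, Matrix.kroneckerMap_apply, Matrix.transpose_apply]
    ring
  set u : Fin n × Fin m → ℂ := K *ᵥ v with hu
  have hKu : Kᴴ *ᵥ u = (μ:ℂ) • v := by
    rw [hu, Matrix.mulVec_mulVec, hvE]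
  set w : Fin m × Fin n → ℂ := fun p => (starRingEnd ℂ) (u (p.2, p.1)) with hw
  have hμc : (starRingEnd ℂ) (μ:ℂ) = (μ:ℂ) := Complex.conj_ofReal μ
  -- Step 1 : K *ᵥ w = -(μ • conj ∘ v ∘ swap)
  have h1 : ∀ (a : Fin n) (b : Fin m),
      (K *ᵥ w) (a, b) = -((μ:ℂ) * (starRingEnd ℂ) (v (b, a))) := by
    intro a b
    have hKub : (Kᴴ *ᵥ u) (b, a) = (μ:ℂ) * v (b, a) := by rw [hKu]; rfl
    have expand : (Kᴴ *ᵥ u) (b, a)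
        = ∑ q : Fin n × Fin m, (starRingEnd ℂ) (K q (b, a)) * u q := by
      simp [Matrix.mulVec, dotProduct, Matrix.conjTranspose_apply]
    have lhs : (K *ᵥ w) (a, b)
        = ∑ q : Fin m × Fin n, K (a,b) q * (starRingEnd ℂ) (u (q.2, q.1)) := by
      simp [Matrix.mulVec, dotProduct, hw]
    rw [lhs]
    have h2 : ∀ q : Fin m × Fin n, K (a,b) q * (starRingEnd ℂ) (u (q.2,q.1))
        = (starRingEnd ℂ) (-((starRingEnd ℂ) (K (q.2,q.1) (b,a)) * u (q.2,q.1))) := by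
      rintro ⟨c, d⟩
      rw [show ((c,d) : Fin m × Fin n).2 = d from rfl]
      rw [hanti a b c d]
      simp only [map_neg, _root_.map_mul, Complex.conj_conj]
      ring
    rw [Finset.sum_congr rfl (fun q _ => h2 q), ← map_sum]
    have h3 : ∑ q : Fin m × Fin n, -((starRingEnd ℂ) (K (q.2,q.1) (b,a)) * u (q.2,q.1))
        = -∑ q : Fin n × Fin m, (starRingEnd ℂ) (K q (b,a)) * u q := by
      rw [← Finset.sum_neg_distrib]
      exact Fintype.sum_equiv (Equiv.prodComm (Fin m) (Fin n)) _ _ (fun q => rfl)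
    rw [h3, ← expand, hKub]
    simp [hμc]
  -- Step 2 : (Kᴴ*K) *ᵥ w = μ • w
  have h4 : (Kᴴ * K) *ᵥ w = (μ:ℂ) • w := by
    funext p
    obtain ⟨c, d⟩ := p
    rw [← Matrix.mulVec_mulVec]
    have expand : (Kᴴ *ᵥ (K *ᵥ w)) (c, d)
        = ∑ q : Fin n × Fin m, (starRingEnd ℂ) (K q (c, d)) * (K *ᵥ w) q := by
      simp [Matrix.mulVec, dotProduct, Matrix.conjTranspose_apply]
    rw [expand]
    have h5 : ∀ q : Fin n × Fin m, (starRingEnd ℂ) (K q (c, d)) * (K *ᵥ w) q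
        = (μ:ℂ) * (starRingEnd ℂ) (K (d,c) (q.2,q.1) * v (q.2,q.1)) := by
      rintro ⟨a, b⟩
      rw [show ((a,b) : Fin n × Fin m).2 = b from rfl]
      rw [h1 a b, hanti a b c d]
      simp only [map_neg, _root_.map_mul, Complex.conj_conj]
      ring
    rw [Finset.sum_congr rfl (fun q _ => h5 q), ← Finset.mul_sum, ← map_sum]
    have h6 : ∑ q : Fin n × Fin m, K (d,c) (q.2,q.1) * v (q.2,q.1)
        = ∑ q : Fin m × Fin n, K (d,c) q * v q := by
      exact Fintype.sum_equiv (Equiv.prodComm (Fin n) (Fin m)) _ _ (fun q => rfl)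
    have h7 : ∑ q : Fin m × Fin n, K (d,c) q * v q = u (d, c) := by
      simp [hu, Matrix.mulVec, dotProduct]
    rw [h6, h7]
    rfl
  -- w ≠ 0
  have hu0 : u ≠ 0 := by
    intro h
    apply hv0
    have : (μ:ℂ) • v = 0 := by rw [← hKu, h, Matrix.mulVec_zero]
    have hμ0 : (μ:ℂ) ≠ 0 := by
      simpa using ne_of_gt hμ
    exact (smul_eq_zero.mp this).resolve_left hμ0
  have hw0 : w ≠ 0 := by
    intro h
    apply hu0
    funext q
    have := congrFun h (q.2, q.1)
    simp only [hw, Pi.zero_apply] at this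
    have : u q = 0 := by
      have h2 := congrArg (starRingEnd ℂ) this
      simpa using h2
    simpa using this
  -- linear independence of v and w
  have pairLI : LinearIndependent ℂ ![v, w] := by
    rw [LinearIndependent.pair_iff]
    intro s t hst
    have hKst : K *ᵥ (s • v + t • w) = 0 := by rw [hst, Matrix.mulVec_zero]
    have h8 : ∀ (i : Fin m) (j : Fin n),
        (starRingEnd ℂ) s * (starRingEnd ℂ) (u (j, i))
          = (starRingEnd ℂ) t * ((μ:ℂ) * v (i, j)) := by
      intro i j
      have h9 := congrFun hKst (j, i)
      rw [Matrix.mulVec_add, Matrix.mulVec_smul, Matrix.mulVec_smul] at h9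
      have h10 : s * u (j, i) + t * (K *ᵥ w) (j, i) = 0 := by simpa using h9
      rw [h1 j i] at h10
      have h11 := congrArg (starRingEnd ℂ) h10
      simp only [map_add, _root_.map_mul, map_neg, map_zero, hμc, Complex.conj_conj] at h11
      linear_combination h11
    have keyEq : ∀ p : Fin m × Fin n,
        (s * (starRingEnd ℂ) s + (μ:ℂ) * t * (starRingEnd ℂ) t) * v p = 0 := by
      rintro ⟨i, j⟩
      have h13 := congrFun hst (i, j)
      simp only [Pi.add_apply, Pi.smul_apply, smul_eq_mul, Pi.zero_apply, hw] at h13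
      linear_combination (starRingEnd ℂ) s * h13 - t * (h8 i j)
    obtain ⟨p, hp⟩ : ∃ p, v p ≠ 0 := by
      by_contra h
      push_neg at h
      exact hv0 (funext h)
    have hcoef : s * (starRingEnd ℂ) s + (μ:ℂ) * t * (starRingEnd ℂ) t = 0 :=
      (mul_eq_zero.mp (keyEq p)).resolve_right hp
    rw [Complex.mul_conj, mul_assoc, Complex.mul_conj] at hcoef
    have hcoefR : (Complex.normSq s : ℝ) + μ * Complex.normSq t = 0 := by
      exact_mod_cast hcoef
    constructor
    · exact Complex.normSq_eq_zero.mp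
        (by nlinarith [Complex.normSq_nonneg s, Complex.normSq_nonneg t])
    · exact Complex.normSq_eq_zero.mp
        (by nlinarith [Complex.normSq_nonneg s, Complex.normSq_nonneg t])
  -- conclude
  set W := Module.End.eigenspace (Matrix.toLin' (Kᴴ * K)) ((μ:ℂ)) with hW
  have hvW : v ∈ W := hv.left
  have hwW : w ∈ W := by
    rw [hW, Module.End.mem_eigenspace_iff, Matrix.toLin'_apply]
    exact h4
  have hb : LinearIndependent ℂ (![(⟨v, hvW⟩ : W), ⟨w, hwW⟩]) := by
    apply LinearIndependent.of_comp W.subtype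
    have hcomp : (W.subtype ∘ ![(⟨v, hvW⟩ : W), ⟨w, hwW⟩]) = ![v, w] := by
      funext i
      fin_cases i <;> rfl
    rw [hcomp]
    exact pairLI
  have hcard := hb.fintype_card_le_finrank
  simpa using hcard
end

section
/- For k×k Hermitian matrices X, Y and indices 1 ≤ i ≤ j ≤ k, the Weyl inequality λ_j(X+Y) ≤ λ_i(X) + λ_{j−i+1}(Y) holds, where λ_l denotes the l-th largest eigenvalue. -/
open Matrix Kronecker BigOperators

section counting
variable {k : ℕ} {A : Matrix (Fin k) (Fin k) ℂ}

lemma eigsSorted_eq (hA : A.IsHermitian) :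
    eigsSorted A = (Finset.univ.toList.map hA.eigenvalues).insertionSort (· ≥ ·) := by
  rw [eigsSorted, dif_pos hA]

lemma eigsSorted_length (hA : A.IsHermitian) : (eigsSorted A).length = k := by
  rw [eigsSorted_eq hA, (List.perm_insertionSort _ _).length_eq, List.length_map,
    Finset.length_toList, Finset.card_univ, Fintype.card_fin]

lemma eigsSorted_sorted (hA : A.IsHermitian) : (eigsSorted A).Pairwise (· ≥ ·) := by
  rw [eigsSorted_eq hA]; exact List.pairwise_insertionSort _ _

lemma countP_eigsSorted (hA : A.IsHermitian) (p : ℝ → Prop) [DecidablePred p] :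
    (eigsSorted A).countP (fun x => decide (p x)) =
      (Finset.univ.filter (fun l => p (hA.eigenvalues l))).card := by
  rw [eigsSorted_eq hA, (List.perm_insertionSort _ _).countP_eq, List.countP_map]
  simp only [Function.comp_def]
  rw [← Multiset.coe_countP, Finset.coe_toList]
  exact (Multiset.countP_eq_card_filter _ _).trans rfl

lemma eigNth_eq_get (hA : A.IsHermitian) {n : ℕ} (h1 : 1 ≤ n) (hn : n ≤ k) :
    eigNth A n = (eigsSorted A).get ⟨n - 1, by
      rw [eigsSorted_length hA]; omega⟩ := by
  rw [eigNth, List.getD_eq_getElem]; rfl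

lemma card_ge_of_eig (hA : A.IsHermitian) {n : ℕ} (h1 : 1 ≤ n) (hn : n ≤ k) :
    n ≤ (Finset.univ.filter (fun l => eigNth A n ≤ hA.eigenvalues l)).card := by
  rw [← countP_eigsSorted hA]
  calc n = ((eigsSorted A).take n).length := by
        rw [List.length_take, eigsSorted_length hA]; omega
    _ = ((eigsSorted A).take n).countP (fun x => decide (eigNth A n ≤ x)) := by
        symm; rw [List.countP_eq_length]
        intro a ha
        rw [List.mem_iff_getElem] at ha
        obtain ⟨q, hq, rfl⟩ := ha
        simp only [List.length_take, eigsSorted_length hA, lt_min_iff] at hq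
        rw [List.getElem_take, decide_eq_true_eq, eigNth_eq_get hA h1 hn]
        exact (eigsSorted_sorted hA).rel_get_of_le
          (a := ⟨q, by rw [eigsSorted_length hA]; omega⟩)
          (b := ⟨n-1, by rw [eigsSorted_length hA]; omega⟩) (by simp; omega)
    _ ≤ (eigsSorted A).countP (fun x => decide (eigNth A n ≤ x)) :=
        (List.take_sublist _ _).countP_le

lemma card_le_of_eig (hA : A.IsHermitian) {n : ℕ} (h1 : 1 ≤ n) (hn : n ≤ k) :
    k - n + 1 ≤ (Finset.univ.filter (fun l => hA.eigenvalues l ≤ eigNth A n)).card := by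
  rw [← countP_eigsSorted hA (fun x => x ≤ eigNth A n)]
  calc k - n + 1 = ((eigsSorted A).drop (n-1)).length := by
        rw [List.length_drop, eigsSorted_length hA]; omega
    _ = ((eigsSorted A).drop (n-1)).countP (fun x => decide (x ≤ eigNth A n)) := by
        symm; rw [List.countP_eq_length]
        intro a ha
        rw [List.mem_iff_getElem] at ha
        obtain ⟨q, hq, rfl⟩ := ha
        simp only [List.length_drop, eigsSorted_length hA] at hq
        rw [List.getElem_drop, decide_eq_true_eq, eigNth_eq_get hA h1 hn]
        exact (eigsSorted_sorted hA).rel_get_of_le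
          (a := ⟨n-1, by rw [eigsSorted_length hA]; omega⟩)
          (b := ⟨n-1+q, by rw [eigsSorted_length hA]; omega⟩) (by simp)
    _ ≤ (eigsSorted A).countP (fun x => decide (x ≤ eigNth A n)) :=
        (List.drop_sublist _ _).countP_le
end counting

section rayleigh
variable {k : ℕ} {A : Matrix (Fin k) (Fin k) ℂ}

open scoped InnerProductSpace ComplexConjugate

lemma toEuclideanLin_eigenvectorBasis (hA : A.IsHermitian) (l : Fin k) :
    Matrix.toEuclideanLin A (hA.eigenvectorBasis l) =
      (hA.eigenvalues l : ℂ) • hA.eigenvectorBasis l := by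
  apply (WithLp.equiv 2 _).injective
  simp only [WithLp.equiv_apply, Matrix.piLp_ofLp_toEuclideanLin]
  ext x
  have := congrFun (hA.mulVec_eigenvectorBasis l) x
  simpa [Matrix.mulVec, Matrix.toLin'_apply] using this

lemma repr_toEuclideanLin (hA : A.IsHermitian) (v : EuclideanSpace ℂ (Fin k)) (l : Fin k) :
    hA.eigenvectorBasis.repr (Matrix.toEuclideanLin A v) l
      = (hA.eigenvalues l : ℂ) * hA.eigenvectorBasis.repr v l := by
  rw [OrthonormalBasis.repr_apply_apply, OrthonormalBasis.repr_apply_apply,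
      ← (Matrix.isHermitian_iff_isSymmetric.1 hA) (hA.eigenvectorBasis l) v,
      toEuclideanLin_eigenvectorBasis hA, inner_smul_left, Complex.conj_ofReal]

lemma re_inner_toEuclideanLin (hA : A.IsHermitian) (v : EuclideanSpace ℂ (Fin k)) :
    (⟪v, Matrix.toEuclideanLin A v⟫_ℂ).re
      = ∑ l, hA.eigenvalues l * ‖hA.eigenvectorBasis.repr v l‖^2 := by
  rw [← hA.eigenvectorBasis.repr.inner_map_map v (Matrix.toEuclideanLin A v)]
  rw [PiLp.inner_apply]
  rw [Complex.re_sum]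
  refine Finset.sum_congr rfl fun l _ => ?_
  rw [repr_toEuclideanLin hA]
  set c := hA.eigenvectorBasis.repr v l
  have : (starRingEnd ℂ) c * ((hA.eigenvalues l : ℂ) * c)
      = (hA.eigenvalues l : ℂ) * ((‖c‖:ℝ)^2 : ℝ) := by
    rw [mul_left_comm, ← Complex.normSq_eq_conj_mul_self, Complex.normSq_eq_norm_sq]
  rw [RCLike.inner_apply] at *
  rw [mul_comm, this]
  norm_cast

lemma norm_sq_eq_sum_repr (hA : A.IsHermitian) (v : EuclideanSpace ℂ (Fin k)) :
    ‖v‖^2 = ∑ l, ‖hA.eigenvectorBasis.repr v l‖^2 := by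
  rw [← hA.eigenvectorBasis.repr.norm_map v, EuclideanSpace.norm_eq,
    Real.sq_sqrt (Finset.sum_nonneg fun l _ => sq_nonneg _)]

lemma repr_eq_zero_of_not_mem (hA : A.IsHermitian) (S : Finset (Fin k))
    {v : EuclideanSpace ℂ (Fin k)}
    (hv : v ∈ Submodule.span ℂ (⇑hA.eigenvectorBasis '' ↑S)) {l : Fin k} (hl : l ∉ S) :
    hA.eigenvectorBasis.repr v l = 0 := by
  rw [← hA.eigenvectorBasis.coe_toBasis] at hv
  have := hA.eigenvectorBasis.toBasis.mem_span_image.1 hv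
  rw [← hA.eigenvectorBasis.coe_toBasis_repr_apply]
  by_contra h
  exact hl (this (Finsupp.mem_support_iff.2 h))

lemma rayleigh_le (hA : A.IsHermitian) (S : Finset (Fin k)) {c : ℝ}
    (hS : ∀ l ∈ S, hA.eigenvalues l ≤ c) {v : EuclideanSpace ℂ (Fin k)}
    (hv : v ∈ Submodule.span ℂ (⇑hA.eigenvectorBasis '' ↑S)) :
    (⟪v, Matrix.toEuclideanLin A v⟫_ℂ).re ≤ c * ‖v‖^2 := by
  rw [re_inner_toEuclideanLin hA, norm_sq_eq_sum_repr hA, Finset.mul_sum]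
  refine Finset.sum_le_sum fun l _ => ?_
  by_cases hl : l ∈ S
  · exact mul_le_mul_of_nonneg_right (hS l hl) (sq_nonneg _)
  · simp [repr_eq_zero_of_not_mem hA S hv hl]

lemma rayleigh_ge (hA : A.IsHermitian) (S : Finset (Fin k)) {c : ℝ}
    (hS : ∀ l ∈ S, c ≤ hA.eigenvalues l) {v : EuclideanSpace ℂ (Fin k)}
    (hv : v ∈ Submodule.span ℂ (⇑hA.eigenvectorBasis '' ↑S)) :
    c * ‖v‖^2 ≤ (⟪v, Matrix.toEuclideanLin A v⟫_ℂ).re := by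
  rw [re_inner_toEuclideanLin hA, norm_sq_eq_sum_repr hA, Finset.mul_sum]
  refine Finset.sum_le_sum fun l _ => ?_
  by_cases hl : l ∈ S
  · exact mul_le_mul_of_nonneg_right (hS l hl) (sq_nonneg _)
  · simp [repr_eq_zero_of_not_mem hA S hv hl]

lemma finrank_span_eigs (hA : A.IsHermitian) (S : Finset (Fin k)) :
    Module.finrank ℂ (Submodule.span ℂ (⇑hA.eigenvectorBasis '' ↑S)) = S.card := by
  classical
  have hinj : Function.Injective ⇑hA.eigenvectorBasis :=
    hA.eigenvectorBasis.orthonormal.linearIndependent.injective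
  have hli : LinearIndependent ℂ ((↑) : (⇑hA.eigenvectorBasis '' ↑S) → EuclideanSpace ℂ (Fin k)) :=
    LinearIndepOn.id_image (s := (S : Set (Fin k))) (v := ⇑hA.eigenvectorBasis)
      (hA.eigenvectorBasis.orthonormal.linearIndependent.comp _ Subtype.val_injective)
  rw [finrank_span_set_eq_card hli, Set.toFinset_image]
  simp [Finset.card_image_of_injective _ hinj]
end rayleigh

open scoped InnerProductSpace

theorem weyl_inequality {k : ℕ} (X Y : Matrix (Fin k) (Fin k) ℂ)
    (hX : X.IsHermitian) (hY : Y.IsHermitian)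
    (i j : ℕ) (h1 : 1 ≤ i) (hij : i ≤ j) (hjk : j ≤ k) :
    eigNth (X + Y) j ≤ eigNth X i + eigNth Y (j - i + 1) := by
  classical
  have hXY : (X + Y).IsHermitian := hX.add hY
  set μX := eigNth X i with hμX
  set μY := eigNth Y (j - i + 1) with hμY
  set μZ := eigNth (X + Y) j with hμZ
  set SX : Finset (Fin k) := Finset.univ.filter (fun l => hX.eigenvalues l ≤ μX) with hSXd
  set SY : Finset (Fin k) := Finset.univ.filter (fun l => hY.eigenvalues l ≤ μY) with hSYd
  set SZ : Finset (Fin k) := Finset.univ.filter (fun l => μZ ≤ hXY.eigenvalues l) with hSZd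
  have hSX : k - i + 1 ≤ SX.card := card_le_of_eig hX h1 (le_trans hij hjk)
  have hSY : k - (j - i + 1) + 1 ≤ SY.card := card_le_of_eig hY (by omega) (by omega)
  have hSZ : j ≤ SZ.card := card_ge_of_eig hXY (le_trans h1 hij) hjk
  set V := Submodule.span ℂ (⇑hX.eigenvectorBasis '' ↑SX) with hVd
  set W := Submodule.span ℂ (⇑hY.eigenvectorBasis '' ↑SY) with hWd
  set Z := Submodule.span ℂ (⇑hXY.eigenvectorBasis '' ↑SZ) with hZd
  have dimV : k - i + 1 ≤ Module.finrank ℂ V := by rw [hVd, finrank_span_eigs]; exact hSX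
  have dimW : k - (j - i + 1) + 1 ≤ Module.finrank ℂ W := by
    rw [hWd, finrank_span_eigs]; exact hSY
  have dimZ : j ≤ Module.finrank ℂ Z := by rw [hZd, finrank_span_eigs]; exact hSZ
  have htotal : Module.finrank ℂ (EuclideanSpace ℂ (Fin k)) = k := finrank_euclideanSpace_fin
  have hVW : k - j + 1 ≤ Module.finrank ℂ ↥(V ⊓ W) := by
    have h := Submodule.finrank_sup_add_finrank_inf_eq V W
    have hle := Submodule.finrank_le (V ⊔ W)
    omega
  have hVWZ : 1 ≤ Module.finrank ℂ ↥(V ⊓ W ⊓ Z) := by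
    have h := Submodule.finrank_sup_add_finrank_inf_eq (V ⊓ W) Z
    have hle := Submodule.finrank_le ((V ⊓ W) ⊔ Z)
    omega
  have hne : (V ⊓ W ⊓ Z) ≠ ⊥ := by
    intro h; rw [h, finrank_bot] at hVWZ; omega
  obtain ⟨v, hv, hv0⟩ := Submodule.exists_mem_ne_zero_of_ne_bot hne
  rw [Submodule.mem_inf, Submodule.mem_inf] at hv
  obtain ⟨⟨hvV, hvW⟩, hvZ⟩ := hv
  have hnv : (0:ℝ) < ‖v‖^2 := by have := norm_pos_iff.2 hv0; positivity
  have hZle : μZ * ‖v‖^2 ≤ (⟪v, Matrix.toEuclideanLin (X+Y) v⟫_ℂ).re :=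
    rayleigh_ge hXY SZ (fun l hl => (Finset.mem_filter.1 hl).2) hvZ
  have hXle : (⟪v, Matrix.toEuclideanLin X v⟫_ℂ).re ≤ μX * ‖v‖^2 :=
    rayleigh_le hX SX (fun l hl => (Finset.mem_filter.1 hl).2) hvV
  have hYle : (⟪v, Matrix.toEuclideanLin Y v⟫_ℂ).re ≤ μY * ‖v‖^2 :=
    rayleigh_le hY SY (fun l hl => (Finset.mem_filter.1 hl).2) hvW
  have hsplit : (⟪v, Matrix.toEuclideanLin (X+Y) v⟫_ℂ).re
      = (⟪v, Matrix.toEuclideanLin X v⟫_ℂ).re + (⟪v, Matrix.toEuclideanLin Y v⟫_ℂ).re := by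
    rw [map_add, LinearMap.add_apply, inner_add_right, Complex.add_re]
  have hmul : μZ * ‖v‖^2 ≤ (μX + μY) * ‖v‖^2 := by
    rw [add_mul]; linarith
  exact (mul_le_mul_iff_left₀ hnv).1 hmul
end

section
/- For m×n complex matrices A, C with m, n ≥ 2, σ₁(Cᵀ⊗A − Aᵀ⊗C)² + σ₂(Cᵀ⊗A − Aᵀ⊗C)² ≤ ‖Cᵀ⊗A − Aᵀ⊗C‖_F², and consequently 2σ₁(Cᵀ⊗A − Aᵀ⊗C)² ≤ ‖A⊗C − C⊗A‖_F². -/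
open Matrix Kronecker BigOperators

/- ### Auxiliary lemmas -/

lemma conj_mulVec' {ι κ : Type*} [Fintype κ] (M : Matrix ι κ ℂ) (x : κ → ℂ) :
    M.map (starRingEnd ℂ) *ᵥ star x = star (M *ᵥ x) := by
  ext i
  simp only [Matrix.mulVec, dotProduct, Pi.star_apply, Matrix.map_apply, star_sum]
  exact Finset.sum_congr rfl fun j _ => by simp [mul_comm]

lemma skew_dot' {ι : Type*} [Fintype ι] {S : Matrix ι ι ℂ} (hS : Sᵀ = -S) (x : ι → ℂ) :
    x ⬝ᵥ (S *ᵥ x) = 0 := by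
  have h : x ⬝ᵥ (S *ᵥ x) = (Sᵀ *ᵥ x) ⬝ᵥ x := by
    rw [Matrix.dotProduct_mulVec, mulVec_transpose]
  rw [hS] at h
  have h2 : ((-S) *ᵥ x) ⬝ᵥ x = -(x ⬝ᵥ (S *ᵥ x)) := by
    rw [Matrix.neg_mulVec, neg_dotProduct, dotProduct_comm]
  rw [h2] at h
  linear_combination (h : _) / 2

lemma real_smul_pi' {ι : Type*} (μ : ℝ) (x : ι → ℂ) : μ • x = (μ : ℂ) • x := by
  ext i; simp [Complex.real_smul]

lemma skew_pair' {ι : Type*} [Fintype ι] [DecidableEq ι] {S : Matrix ι ι ℂ}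
    (hS : Sᵀ = -S) (hH : (Sᴴ * S).IsHermitian) {μ : ℝ} {i₀ : ι}
    (h0 : hH.eigenvalues i₀ = μ) (hμ : μ ≠ 0) :
    ∃ j, j ≠ i₀ ∧ hH.eigenvalues j = μ := by
  classical
  set b := hH.eigenvectorBasis with hb
  set v : ι → ℂ := ⇑(b i₀) with hvdef
  have hv : (Sᴴ * S) *ᵥ v = (μ : ℂ) • v := by
    rw [← real_smul_pi', ← h0]; exact hH.mulVec_eigenvectorBasis i₀
  have hunit : star v ⬝ᵥ v = 1 := by
    have h := orthonormal_iff_ite.mp hH.eigenvectorBasis.orthonormal i₀ i₀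
    rw [EuclideanSpace.inner_eq_star_dotProduct] at h
    rw [dotProduct_comm]
    simpa [hvdef, hb] using h
  set T : Matrix ι ι ℂ := S.map (starRingEnd ℂ) with hT
  have hSH : Sᴴ = Tᵀ := by
    ext i j; simp [Matrix.conjTranspose_apply, hT]
  have hTskew : Tᵀ = -T := by
    ext i j
    have := congrFun (congrFun hS j) i
    simp only [Matrix.transpose_apply, Matrix.neg_apply] at this ⊢
    simp [hT, Matrix.map_apply, this]
  set w : ι → ℂ := star (S *ᵥ v) with hw
  have hHmapstar : (Sᴴ * S).map (starRingEnd ℂ) = Sᵀ * T := by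
    rw [Matrix.map_mul]
    congr 1
    ext i j
    simp [Matrix.conjTranspose_apply]
  have hkey : (Sᴴ * S).map (starRingEnd ℂ) *ᵥ star w = (μ : ℂ) • star w := by
    have hws : star w = S *ᵥ v := by rw [hw, star_star]
    rw [hws, hHmapstar, Matrix.mulVec_mulVec]
    have hmat : Sᵀ * T * S = S * (Sᴴ * S) := by
      rw [hS, hSH, hTskew]
      noncomm_ring
    rw [hmat, ← Matrix.mulVec_mulVec, hv, Matrix.mulVec_smul]
  have hHw : (Sᴴ * S) *ᵥ w = (μ : ℂ) • w := by
    have := congrArg star hkey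
    rw [conj_mulVec', star_star, star_smul] at this
    simpa using this
  have horthv : star v ⬝ᵥ w = 0 := by
    rw [hw, Matrix.star_dotProduct_star, dotProduct_comm, skew_dot' hS, star_zero]
  have hnw : star w ⬝ᵥ w = (μ : ℂ) := by
    have hws : star w = S *ᵥ v := by rw [hw, star_star]
    calc star w ⬝ᵥ w = w ⬝ᵥ star w := dotProduct_comm _ _
    _ = star (S *ᵥ v) ⬝ᵥ (S *ᵥ v) := by rw [hw, hws]
    _ = (star v ᵥ* Sᴴ) ⬝ᵥ (S *ᵥ v) := by rw [Matrix.star_mulVec]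
    _ = star v ⬝ᵥ (Sᴴ *ᵥ (S *ᵥ v)) := (Matrix.dotProduct_mulVec _ _ _).symm
    _ = star v ⬝ᵥ ((Sᴴ * S) *ᵥ v) := by rw [Matrix.mulVec_mulVec]
    _ = star v ⬝ᵥ ((μ : ℂ) • v) := by rw [hv]
    _ = (μ : ℂ) * (star v ⬝ᵥ v) := dotProduct_smul _ _ _
    _ = (μ : ℂ) := by rw [hunit, mul_one]
  by_contra hcon
  push_neg at hcon
  have hc : ∀ j, star ⇑(b j) ⬝ᵥ w = 0 := by
    intro j
    have h1 : ((hH.eigenvalues j : ℂ)) * (star ⇑(b j) ⬝ᵥ w) = (μ : ℂ) * (star ⇑(b j) ⬝ᵥ w) := by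
      have hbj : (Sᴴ * S) *ᵥ ⇑(b j) = (hH.eigenvalues j : ℂ) • ⇑(b j) := by
        rw [← real_smul_pi']; exact hH.mulVec_eigenvectorBasis j
      calc ((hH.eigenvalues j : ℂ)) * (star ⇑(b j) ⬝ᵥ w)
          = ((hH.eigenvalues j : ℂ) • star ⇑(b j)) ⬝ᵥ w := by rw [smul_dotProduct]; rfl
        _ = star ((Sᴴ * S) *ᵥ ⇑(b j)) ⬝ᵥ w := by
            rw [hbj, star_smul]; simp
        _ = (star ⇑(b j) ᵥ* (Sᴴ * S)ᴴ) ⬝ᵥ w := by rw [Matrix.star_mulVec]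
        _ = (star ⇑(b j) ᵥ* (Sᴴ * S)) ⬝ᵥ w := by rw [hH.eq]
        _ = star ⇑(b j) ⬝ᵥ ((Sᴴ * S) *ᵥ w) := (Matrix.dotProduct_mulVec _ _ _).symm
        _ = star ⇑(b j) ⬝ᵥ ((μ : ℂ) • w) := by rw [hHw]
        _ = (μ : ℂ) * (star ⇑(b j) ⬝ᵥ w) := dotProduct_smul _ _ _
    by_cases hj : j = i₀
    · rw [hj]; exact horthv
    · have hne : (hH.eigenvalues j : ℂ) ≠ (μ : ℂ) := by
        exact_mod_cast hcon j hj
      have := sub_eq_zero.mpr h1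
      rw [← sub_mul] at this
      rcases mul_eq_zero.mp this with h | h
      · exact absurd (sub_eq_zero.mp h) hne
      · exact h
  have hW : (WithLp.equiv 2 (ι → ℂ)).symm w = 0 := by
    rw [← b.sum_repr' ((WithLp.equiv 2 (ι → ℂ)).symm w)]
    apply Finset.sum_eq_zero
    intro j _
    have : (inner ℂ (b j) ((WithLp.equiv 2 (ι → ℂ)).symm w) : ℂ) = 0 := by
      rw [EuclideanSpace.inner_eq_star_dotProduct, dotProduct_comm]
      simpa using hc j
    rw [this, zero_smul]
  have hw0 : w = 0 := by
    have := congrArg (WithLp.equiv 2 (ι → ℂ)) hW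
    simpa using this
  rw [hw0] at hnw
  simp at hnw
  exact hμ (by exact_mod_cast hnw.symm)

lemma sum_eig_eq_frobSq' {p q : Type*} [Fintype p] [Fintype q] [DecidableEq q]
    (K : Matrix p q ℂ) (hH : (Kᴴ * K).IsHermitian) :
    ∑ i, hH.eigenvalues i = frobSq K := by
  have h1 : (Kᴴ * K).trace = ((∑ i, hH.eigenvalues i : ℝ) : ℂ) := by
    rw [hH.trace_eq_sum_eigenvalues]
    simp
  have h2 : (Kᴴ * K).trace = ((frobSq K : ℝ) : ℂ) := by
    rw [Matrix.trace]
    unfold frobSq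
    push_cast
    rw [Finset.sum_comm]
    apply Finset.sum_congr rfl
    intro i _
    rw [Matrix.diag_apply, Matrix.mul_apply]
    apply Finset.sum_congr rfl
    intro j _
    rw [Matrix.conjTranspose_apply, ← Complex.ofReal_pow, Complex.sq_norm,
      Complex.normSq_eq_conj_mul_self]
    rfl
  exact Complex.ofReal_injective (h1.symm.trans h2)

lemma list_sum_two_le' {l : List ℝ} (h : ∀ x ∈ l, 0 ≤ x) :
    l.getD 0 0 + l.getD 1 0 ≤ l.sum := by
  match l with
  | [] => simp
  | [a] => simp
  | a :: b :: t =>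
    simp only [List.getD_cons_zero, List.getD_cons_succ, List.sum_cons]
    have ht : 0 ≤ t.sum := List.sum_nonneg (fun x hx => h x (by simp [hx]))
    linarith

lemma list_second_eq' {l : List ℝ} {μ : ℝ} (hs : l.Pairwise (· ≥ ·))
    (hcount : 2 ≤ l.count μ) (hle : ∀ x ∈ l, x ≤ μ) : l.getD 1 0 = μ := by
  match l with
  | [] => simp at hcount
  | [a] =>
    have := List.count_le_length (a := μ) (l := [a])
    simp at this
    omega
  | a :: b :: t =>
    simp only [List.getD_cons_succ, List.getD_cons_zero]
    have hmem : μ ∈ b :: t := by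
      by_contra hmu
      have : (b :: t).count μ = 0 := List.count_eq_zero.mpr hmu
      rw [List.count_cons] at hcount
      split at hcount <;> omega
    have h1 : μ ≤ b := by
      rcases List.mem_cons.mp hmem with h | h
      · exact le_of_eq h
      · exact List.rel_of_pairwise_cons (List.pairwise_cons.mp hs).2 h
    exact le_antisymm (hle b (by simp)) h1

lemma sorted_head_ge' {l : List ℝ} (hs : l.Pairwise (· ≥ ·)) {x : ℝ} (hx : x ∈ l) :
    x ≤ l.getD 0 0 := by
  match l with
  | [] => simp at hx
  | a :: t =>
    simp only [List.getD_cons_zero]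
    rcases List.mem_cons.mp hx with h | h
    · exact le_of_eq h
    · exact List.rel_of_pairwise_cons hs h

open ComplexOrder in
lemma skew_main' {ι : Type*} [Fintype ι] [DecidableEq ι] (S : Matrix ι ι ℂ)
    (hS : Sᵀ = -S) (hcard : 2 ≤ Fintype.card ι) :
    0 ≤ eigNth (Sᴴ * S) 1 ∧ 0 ≤ eigNth (Sᴴ * S) 2 ∧ eigNth (Sᴴ * S) 2 = eigNth (Sᴴ * S) 1 ∧
      eigNth (Sᴴ * S) 1 + eigNth (Sᴴ * S) 2 ≤ frobSq S := by
  classical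
  have hH : (Sᴴ * S).IsHermitian := Matrix.isHermitian_conjTranspose_mul_self S
  have hev0 : ∀ i, 0 ≤ hH.eigenvalues i :=
    fun i => (Matrix.posSemidef_conjTranspose_mul_self S).eigenvalues_nonneg i
  set L0 : List ℝ := Finset.univ.toList.map hH.eigenvalues with hL0
  set l : List ℝ := L0.insertionSort (· ≥ ·) with hl
  have hls : eigsSorted (Sᴴ * S) = l := by rw [eigsSorted, dif_pos hH]
  have hperm : l.Perm L0 := List.perm_insertionSort _ L0
  have hsor : l.Pairwise (· ≥ ·) := List.pairwise_insertionSort _ L0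
  have hnon : ∀ x ∈ l, 0 ≤ x := by
    intro x hx
    rcases List.mem_map.mp (hperm.mem_iff.mp hx) with ⟨i, _, rfl⟩
    exact hev0 i
  have hlen : l.length = Fintype.card ι := by
    rw [hperm.length_eq, List.length_map, Finset.length_toList, Finset.card_univ]
  have e1 : eigNth (Sᴴ * S) 1 = l.getD 0 0 := by rw [eigNth, hls]
  have e2 : eigNth (Sᴴ * S) 2 = l.getD 1 0 := by rw [eigNth, hls]
  set μ := l.getD 0 0 with hmu
  have hl1 : 0 < l.length := by omega
  have hl2 : 1 < l.length := by omega
  have hmem : μ ∈ l := by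
    rw [hmu, List.getD_eq_getElem l 0 hl1]; exact List.getElem_mem hl1
  have hle : ∀ x ∈ l, x ≤ μ := fun x hx => sorted_head_ge' hsor hx
  obtain ⟨i₀, -, h0⟩ := List.mem_map.mp (hperm.mem_iff.mp hmem)
  have hsecond : l.getD 1 0 = μ := by
    by_cases hμ0 : μ = 0
    · rw [List.getD_eq_getElem l 0 hl2]
      have hx := List.getElem_mem hl2
      exact le_antisymm (hle _ hx) (by rw [hμ0]; exact hnon _ hx)
    · obtain ⟨j, hji, hj⟩ := skew_pair' hS hH h0 hμ0
      have hcount : 2 ≤ l.count μ := by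
        rw [hperm.count_eq]
        have hi0 : i₀ ∈ Finset.univ.toList := by simp
        have p1 : Finset.univ.toList.Perm (i₀ :: Finset.univ.toList.erase i₀) :=
          List.perm_cons_erase hi0
        have hjmem : j ∈ Finset.univ.toList.erase i₀ :=
          (List.mem_erase_of_ne hji).mpr (by simp)
        have p2 : (Finset.univ.toList.erase i₀).Perm
            (j :: (Finset.univ.toList.erase i₀).erase j) := List.perm_cons_erase hjmem
        have p3 : Finset.univ.toList.Perm
            (i₀ :: j :: (Finset.univ.toList.erase i₀).erase j) := p1.trans (p2.cons i₀)
        rw [hL0, (p3.map hH.eigenvalues).count_eq]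
        simp only [List.map_cons, List.count_cons, h0, hj]
        simp
      exact list_second_eq' hsor hcount hle
  have hsum : l.sum = frobSq S := by
    rw [hperm.sum_eq, hL0, Finset.sum_map_toList, sum_eig_eq_frobSq' S hH]
  refine ⟨?_, ?_, ?_, ?_⟩
  · rw [e1]; exact hnon _ hmem
  · rw [e2, hsecond]; exact hnon _ hmem
  · rw [e1, e2, hsecond]
  · rw [e1, e2, ← hsum]
    exact list_sum_two_le' hnon

set_option maxHeartbeats 2000000 in
theorem K_sv_bound {m n : ℕ} (hm : 2 ≤ m) (hn : 2 ≤ n) (A C : Matrix (Fin m) (Fin n) ℂ) :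
    sv (Cᵀ ⊗ₖ A - Aᵀ ⊗ₖ C) 1 ^ 2 + sv (Cᵀ ⊗ₖ A - Aᵀ ⊗ₖ C) 2 ^ 2
        ≤ frobSq (Cᵀ ⊗ₖ A - Aᵀ ⊗ₖ C) ∧
    2 * sv (Cᵀ ⊗ₖ A - Aᵀ ⊗ₖ C) 1 ^ 2 ≤ frobSq (A ⊗ₖ C - C ⊗ₖ A) := by
  classical
  set K : Matrix (Fin n × Fin m) (Fin m × Fin n) ℂ := Cᵀ ⊗ₖ A - Aᵀ ⊗ₖ C with hK
  set S : Matrix (Fin m × Fin n) (Fin m × Fin n) ℂ := Matrix.of (fun p q => K (p.2, p.1) q)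
    with hSdef
  have hS : Sᵀ = -S := by
    ext ⟨a, b⟩ ⟨c, d⟩
    simp only [Matrix.transpose_apply, Matrix.neg_apply, hSdef, Matrix.of_apply, hK,
      Matrix.sub_apply, Matrix.kroneckerMap_apply, Matrix.transpose_apply]
    ring
  have hKS : Kᴴ * K = Sᴴ * S := by
    ext p q
    rw [Matrix.mul_apply, Matrix.mul_apply]
    rw [← Equiv.sum_comp (Equiv.prodComm (Fin m) (Fin n))
      (fun r => Kᴴ p r * K r q)]
    apply Finset.sum_congr rfl
    intro r _
    rfl
  have hcard : 2 ≤ Fintype.card (Fin m × Fin n) := by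
    rw [Fintype.card_prod, Fintype.card_fin, Fintype.card_fin]
    nlinarith
  obtain ⟨h1, h2, heq, hsum⟩ := skew_main' S hS hcard
  have hsv1 : sv K 1 ^ 2 = eigNth (Sᴴ * S) 1 := by
    rw [sv, hKS, Real.sq_sqrt h1]
  have hsv2 : sv K 2 ^ 2 = eigNth (Sᴴ * S) 2 := by
    rw [sv, hKS, Real.sq_sqrt h2]
  have hfrobKS : frobSq S = frobSq K := by
    rw [frobSq, frobSq]
    rw [← Equiv.sum_comp (Equiv.prodComm (Fin m) (Fin n))
      (fun i => ∑ j, ‖K i j‖ ^ 2)]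
    rfl
  have hfrobKM : frobSq K = frobSq (A ⊗ₖ C - C ⊗ₖ A) := by
    rw [frobSq, frobSq, ← Fintype.sum_prod_type', ← Fintype.sum_prod_type']
    let e : ((Fin n × Fin m) × (Fin m × Fin n)) ≃ ((Fin m × Fin m) × (Fin n × Fin n)) :=
      { toFun := fun z => ((z.1.2, z.2.1), (z.2.2, z.1.1))
        invFun := fun z => ((z.2.2, z.1.1), (z.1.2, z.2.1))
        left_inv := fun ⟨⟨i, k⟩, ⟨j, l⟩⟩ => rfl
        right_inv := fun ⟨⟨a, b⟩, ⟨c, d⟩⟩ => rfl }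
    rw [← Equiv.sum_comp e (fun z => ‖(A ⊗ₖ C - C ⊗ₖ A) z.1 z.2‖ ^ 2)]
    apply Finset.sum_congr rfl
    rintro ⟨⟨i, k⟩, ⟨j, l⟩⟩ -
    congr 2
    simp only [hK, Matrix.sub_apply, Matrix.kroneckerMap_apply, Matrix.transpose_apply, e,
      Equiv.coe_fn_mk]
    ring
  constructor
  · rw [hsv1, hsv2, ← hfrobKS]
    exact hsum
  · rw [two_mul, ← hfrobKM, ← hfrobKS]
    calc sv K 1 ^ 2 + sv K 1 ^ 2 = eigNth (Sᴴ * S) 1 + eigNth (Sᴴ * S) 2 := by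
          rw [hsv1, heq]
    _ ≤ frobSq S := hsum
end

section
/- If B is an n×m complex matrix of rank at most 2, then for all m×n complex matrices A, C, ‖ABC − CBA‖_F² ≤ ‖B‖₂²‖A⊗C − C⊗A‖_F². -/
open Matrix Kronecker BigOperators

section Helpers

set_option linter.unusedSectionVars false

variable {ι κ : Type*} [Fintype ι] [DecidableEq ι] [Fintype κ]

lemma star_mulVec' (M : Matrix ι ι ℂ) (u : ι → ℂ) :
    star (M *ᵥ u) = M.map (starRingEnd ℂ) *ᵥ (star u) := by
  funext i; simp [mulVec, dotProduct, map_sum, Pi.star_apply, mul_comm]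

lemma mulVec_star' (M : Matrix ι ι ℂ) (u : ι → ℂ) :
    M *ᵥ star u = star (M.map (starRingEnd ℂ) *ᵥ u) := by
  funext i; simp [mulVec, dotProduct, map_sum, Pi.star_apply, mul_comm]

lemma re_star_dot (z : ι → ℂ) :
    Complex.re (star z ⬝ᵥ z) = ∑ i, ‖z i‖ ^ 2 := by
  simp only [dotProduct, Complex.re_sum]
  congr 1; funext i
  rw [Pi.star_apply, ← Complex.normSq_eq_norm_sq]
  simp [Complex.normSq_apply, Complex.mul_re]

lemma quad_form (W : Matrix κ ι ℂ) (y : ι → ℂ) :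
    star y ⬝ᵥ ((Wᴴ * W) *ᵥ y) = star (W *ᵥ y) ⬝ᵥ (W *ᵥ y) := by
  rw [← mulVec_mulVec, dotProduct_mulVec, star_mulVec]

lemma conj_eq_neg_conjTranspose (W : Matrix ι ι ℂ) (hW : Wᵀ = -W) :
    W.map (starRingEnd ℂ) = -Wᴴ := by
  funext i j
  have h : W j i = -W i j := by
    have := congrFun (congrFun hW i) j
    simpa using this
  simp [conjTranspose_apply, h]

lemma conj_conjTranspose (W : Matrix ι ι ℂ) : Wᴴ.map (starRingEnd ℂ) = Wᵀ := by
  funext i j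
  simp [conjTranspose_apply]

lemma E1 (H : Matrix ι ι ℂ) (hH : H.IsHermitian) (y : ι → ℂ) :
    Complex.re (star y ⬝ᵥ (H *ᵥ y)) =
      ∑ j, hH.eigenvalues j *
        ‖((hH.eigenvectorUnitary : Matrix ι ι ℂ)ᴴ *ᵥ y) j‖ ^ 2 := by
  have hstar : star ((hH.eigenvectorUnitary : Matrix ι ι ℂ)ᴴ *ᵥ y)
      = star y ᵥ* (hH.eigenvectorUnitary : Matrix ι ι ℂ) := by
    rw [star_mulVec, conjTranspose_conjTranspose]
  conv_lhs => rw [hH.spectral_theorem, Unitary.conjStarAlgAut_apply]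
  rw [Matrix.star_eq_conjTranspose, ← mulVec_mulVec, ← mulVec_mulVec,
    dotProduct_mulVec, ← hstar]
  have hmain : star ((hH.eigenvectorUnitary : Matrix ι ι ℂ)ᴴ *ᵥ y) ⬝ᵥ
      (diagonal (RCLike.ofReal ∘ hH.eigenvalues) *ᵥ
        ((hH.eigenvectorUnitary : Matrix ι ι ℂ)ᴴ *ᵥ y))
      = ∑ j, (hH.eigenvalues j : ℂ) *
        (((hH.eigenvectorUnitary : Matrix ι ι ℂ)ᴴ *ᵥ y) j *
          (starRingEnd ℂ) (((hH.eigenvectorUnitary : Matrix ι ι ℂ)ᴴ *ᵥ y) j)) := by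
    have hco : ∀ c : ℝ, (RCLike.ofReal c : ℂ) = (c : ℂ) := fun _ => rfl
    simp only [dotProduct, mulVec_diagonal, Pi.star_apply, Function.comp_apply, hco,
      Complex.star_def]
    congr 1; funext j; ring
  rw [hmain, Complex.re_sum]
  congr 1; funext j
  rw [Complex.mul_conj, ← Complex.ofReal_mul]
  rw [Complex.ofReal_re, Complex.sq_norm]

lemma E2 (H : Matrix ι ι ℂ) (hH : H.IsHermitian) (y : ι → ℂ) :
    ∑ j, ‖((hH.eigenvectorUnitary : Matrix ι ι ℂ)ᴴ *ᵥ y) j‖ ^ 2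
      = ∑ i, ‖y i‖ ^ 2 := by
  have hstar : star ((hH.eigenvectorUnitary : Matrix ι ι ℂ)ᴴ *ᵥ y)
      = star y ᵥ* (hH.eigenvectorUnitary : Matrix ι ι ℂ) := by
    rw [star_mulVec, conjTranspose_conjTranspose]
  have key : star ((hH.eigenvectorUnitary : Matrix ι ι ℂ)ᴴ *ᵥ y) ⬝ᵥ
      ((hH.eigenvectorUnitary : Matrix ι ι ℂ)ᴴ *ᵥ y) = star y ⬝ᵥ y := by
    rw [hstar, ← dotProduct_mulVec, mulVec_mulVec]
    have h1 : (hH.eigenvectorUnitary : Matrix ι ι ℂ) *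
        (hH.eigenvectorUnitary : Matrix ι ι ℂ)ᴴ = 1 := by
      have := (Matrix.mem_unitaryGroup_iff).mp hH.eigenvectorUnitary.2
      simpa [Matrix.star_eq_conjTranspose] using this
    rw [h1, one_mulVec]
  rw [← re_star_dot, ← re_star_dot, key]

lemma trace_eq_sum_eigs (H : Matrix ι ι ℂ) (hH : H.IsHermitian) :
    Complex.re H.trace = ∑ j, hH.eigenvalues j := by
  have h1 : (hH.eigenvectorUnitary : Matrix ι ι ℂ)ᴴ *
      (hH.eigenvectorUnitary : Matrix ι ι ℂ) = 1 := by
    have := (Matrix.mem_unitaryGroup_iff').mp hH.eigenvectorUnitary.2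
    simpa [Matrix.star_eq_conjTranspose] using this
  conv_lhs => rw [hH.spectral_theorem, Unitary.conjStarAlgAut_apply]
  rw [Matrix.star_eq_conjTranspose, trace_mul_cycle, h1, one_mul, trace_diagonal]
  rw [Complex.re_sum]
  congr 1

lemma trace_cms (W : Matrix κ ι ℂ) :
    Complex.re (Wᴴ * W).trace = ∑ p, ∑ q, ‖W p q‖ ^ 2 := by
  rw [Finset.sum_comm]
  simp only [trace, diag, mul_apply, conjTranspose_apply, Complex.re_sum]
  congr 1; funext q
  congr 1; funext p
  rw [Complex.star_def, mul_comm, Complex.mul_conj]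
  rw [Complex.ofReal_re, ← Complex.sq_norm]

lemma aux2 (μ c : ι → ℝ) (hμ0 : ∀ j, 0 ≤ μ j) (j₀ : ι)
    (hc0 : ∀ j, 0 ≤ c j) (hc_eq : ∑ j, c j = μ j₀) (hcj₀ : c j₀ = 0)
    (hpos : 0 < μ j₀) (hquad : μ j₀ * μ j₀ = ∑ j, μ j * c j) :
    2 * μ j₀ ≤ ∑ j, μ j := by
  have hle : ∀ j, c j ≤ μ j₀ := fun j => hc_eq ▸
    Finset.single_le_sum (fun i _ => hc0 i) (Finset.mem_univ j)
  have h1 : ∑ j, μ j * c j = ∑ j ∈ Finset.univ.erase j₀, μ j * c j := by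
    rw [← Finset.add_sum_erase _ _ (Finset.mem_univ j₀), hcj₀, mul_zero, zero_add]
  have h2 : ∑ j ∈ Finset.univ.erase j₀, μ j * c j
      ≤ ∑ j ∈ Finset.univ.erase j₀, μ j * μ j₀ :=
    Finset.sum_le_sum fun j _ => mul_le_mul_of_nonneg_left (hle j) (hμ0 j)
  have h3 : ∑ j ∈ Finset.univ.erase j₀, μ j * μ j₀
      = (∑ j ∈ Finset.univ.erase j₀, μ j) * μ j₀ := (Finset.sum_mul _ _ _).symm
  have h4 : μ j₀ ≤ ∑ j ∈ Finset.univ.erase j₀, μ j := by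
    have hmul : μ j₀ * μ j₀ ≤ (∑ j ∈ Finset.univ.erase j₀, μ j) * μ j₀ := by
      rw [← h3]; linarith [hquad, h1, h2]
    exact le_of_mul_le_mul_right hmul hpos
  have h5 : ∑ j, μ j = μ j₀ + ∑ j ∈ Finset.univ.erase j₀, μ j :=
    (Finset.add_sum_erase _ _ (Finset.mem_univ j₀)).symm
  linarith

lemma pairing (W : Matrix ι ι ℂ) (hW : Wᵀ = -W) (lam : ℝ)
    (v : ι → ℂ) (hv1 : ∑ i, ‖v i‖ ^ 2 = 1)
    (hev : (Wᴴ * W) *ᵥ v = fun i => (lam:ℂ) * v i) :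
    ∃ w : ι → ℂ, (star v ⬝ᵥ w = 0) ∧ (∑ i, ‖w i‖ ^ 2 = lam) ∧
      ((Wᴴ * W) *ᵥ w = fun i => (lam:ℂ) * w i) := by
  refine ⟨star (W *ᵥ v), ?_, ?_, ?_⟩
  · rw [star_dotProduct_star]
    have hS : v ⬝ᵥ (W *ᵥ v) = 0 := by
      have hWij : ∀ i j : ι, W j i = -W i j := fun i j => by
        have := congrFun (congrFun hW i) j; simpa using this
      have hS1 : v ⬝ᵥ (W *ᵥ v) = ∑ i, ∑ j, v i * (W i j * v j) := by
        simp [dotProduct, mulVec, Finset.mul_sum]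
      have hS2 : (∑ i, ∑ j, v i * (W i j * v j))
          = ∑ j, ∑ i, v i * (W i j * v j) := by rw [Finset.sum_comm]
      have hS3 : (∑ j, ∑ i : ι, v i * (W i j * v j))
          = -∑ i, ∑ j, v i * (W i j * v j) := by
        rw [← Finset.sum_neg_distrib]
        congr 1; funext j
        rw [← Finset.sum_neg_distrib]
        congr 1; funext i
        rw [hWij j i]; ring
      have hthis := hS2.trans hS3
      have h0 : (∑ i, ∑ j, v i * (W i j * v j)) + ∑ i, ∑ j, v i * (W i j * v j) = 0 := by
        nth_rewrite 1 [hthis]; ring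
      rw [hS1]
      exact add_self_eq_zero.mp h0
    rw [dotProduct_comm, hS, star_zero]
  · have h1 : ∀ i, ‖(star (W *ᵥ v)) i‖ = ‖(W *ᵥ v) i‖ := by
      intro i; rw [Pi.star_apply]; exact Complex.norm_conj _
    calc ∑ i, ‖(star (W *ᵥ v)) i‖ ^ 2
        = ∑ i, ‖(W *ᵥ v) i‖ ^ 2 := by simp [h1]
      _ = Complex.re (star (W *ᵥ v) ⬝ᵥ (W *ᵥ v)) := (re_star_dot _).symm
      _ = Complex.re (star v ⬝ᵥ ((Wᴴ * W) *ᵥ v)) := by rw [quad_form]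
      _ = lam := by
          rw [hev]
          have : star v ⬝ᵥ (fun i => (lam:ℂ) * v i) = (lam:ℂ) * (star v ⬝ᵥ v) := by
            simp only [dotProduct, Pi.star_apply, Finset.mul_sum]
            congr 1; funext i; ring
          rw [this, Complex.re_ofReal_mul, re_star_dot, hv1, mul_one]
  · have hconj : W.map (starRingEnd ℂ) = -Wᴴ := conj_eq_neg_conjTranspose W hW
    have step2 : W *ᵥ (star (W *ᵥ v)) = (-(lam:ℂ)) • star v := by
      rw [mulVec_star', hconj, neg_mulVec, mulVec_mulVec, hev]
      funext i
      simp only [Pi.star_apply, Pi.neg_apply, Pi.smul_apply, smul_eq_mul]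
      rw [star_neg, star_mul', Complex.star_def, Complex.conj_ofReal]
      ring
    have step4 : Wᴴ *ᵥ star v = -(star (W *ᵥ v)) := by
      rw [mulVec_star', conj_conjTranspose, hW, neg_mulVec]
      funext i; simp
    funext i
    rw [← mulVec_mulVec, step2, mulVec_smul, step4]
    simp only [Pi.smul_apply, Pi.neg_apply, smul_eq_mul, Pi.star_apply]
    ring

set_option maxHeartbeats 1000000 in
lemma key_antisym (W : Matrix ι ι ℂ) (hW : Wᵀ = -W) (x : ι → ℂ) :
    2 * (∑ p, ‖(W *ᵥ x) p‖ ^ 2) ≤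
      (∑ p, ∑ q, ‖W p q‖ ^ 2) * ∑ p, ‖x p‖ ^ 2 := by
  rcases isEmpty_or_nonempty ι with hι | hι
  · simp
  have hH : (Wᴴ * W).IsHermitian := isHermitian_conjTranspose_mul_self W
  have hμ0 : ∀ j, 0 ≤ hH.eigenvalues j := fun j =>
    W.eigenvalues_conjTranspose_mul_self_nonneg j
  obtain ⟨j₀, -, hj₀⟩ := Finset.exists_max_image Finset.univ hH.eigenvalues
    ⟨Classical.arbitrary ι, Finset.mem_univ _⟩
  have hray : ∀ y : ι → ℂ, ∑ p, ‖(W *ᵥ y) p‖ ^ 2 ≤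
      hH.eigenvalues j₀ * ∑ p, ‖y p‖ ^ 2 := by
    intro y
    have h1 : ∑ p, ‖(W *ᵥ y) p‖ ^ 2
        = Complex.re (star y ⬝ᵥ ((Wᴴ * W) *ᵥ y)) := by
      rw [quad_form, re_star_dot]
    rw [h1, E1 _ hH y, ← E2 _ hH y]
    apply Finset.sum_le_sum ?_ |>.trans_eq (Finset.mul_sum _ _ _).symm
    intro j _
    exact mul_le_mul_of_nonneg_right (hj₀ j (Finset.mem_univ j)) (by positivity)
  have htr : ∑ p, ∑ q, ‖W p q‖ ^ 2 = ∑ j, hH.eigenvalues j := by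
    rw [← trace_cms, trace_eq_sum_eigs _ hH]
  have hsum : hH.eigenvalues j₀ ≤ 0 ∨
      2 * hH.eigenvalues j₀ ≤ ∑ j, hH.eigenvalues j := by
    rcases le_or_gt (hH.eigenvalues j₀) 0 with h | hpos
    · exact Or.inl h
    right
    have hveq : (fun i => (hH.eigenvectorUnitary : Matrix ι ι ℂ) i j₀)
        = ⇑(hH.eigenvectorBasis j₀) := by
      funext i; exact hH.eigenvectorUnitary_apply i j₀
    have hv1 : ∑ i, ‖(hH.eigenvectorUnitary : Matrix ι ι ℂ) i j₀‖ ^ 2 = 1 := by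
      have hinner : (inner ℂ (hH.eigenvectorBasis j₀) (hH.eigenvectorBasis j₀) : ℂ)
          = star (fun i => (hH.eigenvectorUnitary : Matrix ι ι ℂ) i j₀)
            ⬝ᵥ (fun i => (hH.eigenvectorUnitary : Matrix ι ι ℂ) i j₀) := by
        rw [hveq, EuclideanSpace.inner_eq_star_dotProduct, dotProduct_comm]
      have hnorm : ‖hH.eigenvectorBasis j₀‖ = 1 := hH.eigenvectorBasis.orthonormal.1 j₀
      have h1 : (inner ℂ (hH.eigenvectorBasis j₀) (hH.eigenvectorBasis j₀) : ℂ) = 1 := by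
        rw [inner_self_eq_norm_sq_to_K, hnorm]; norm_num
      have := re_star_dot (fun i => (hH.eigenvectorUnitary : Matrix ι ι ℂ) i j₀)
      rw [← this, ← hinner, h1]
      norm_num
    have hev : (Wᴴ * W) *ᵥ (fun i => (hH.eigenvectorUnitary : Matrix ι ι ℂ) i j₀)
        = fun i => (hH.eigenvalues j₀ : ℂ) *
            (hH.eigenvectorUnitary : Matrix ι ι ℂ) i j₀ := by
      rw [hveq, hH.mulVec_eigenvectorBasis j₀]
      funext i
      simp [Complex.real_smul]
    obtain ⟨w, hw0, hwnorm, hwev⟩ := pairing W hW (hH.eigenvalues j₀) _ hv1 hev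
    apply aux2 hH.eigenvalues
      (fun j => ‖((hH.eigenvectorUnitary : Matrix ι ι ℂ)ᴴ *ᵥ w) j‖ ^ 2)
      hμ0 j₀ (fun j => by positivity) ?_ ?_ hpos ?_
    · rw [E2 _ hH w, hwnorm]
    · have hz : ((hH.eigenvectorUnitary : Matrix ι ι ℂ)ᴴ *ᵥ w) j₀
          = star (fun i => (hH.eigenvectorUnitary : Matrix ι ι ℂ) i j₀) ⬝ᵥ w := by
        simp [mulVec, dotProduct, conjTranspose_apply]
      show ‖((hH.eigenvectorUnitary : Matrix ι ι ℂ)ᴴ *ᵥ w) j₀‖ ^ 2 = 0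
      rw [hz, hw0]
      simp
    · rw [← E1 _ hH w, hwev]
      have : star w ⬝ᵥ (fun i => (hH.eigenvalues j₀ : ℂ) * w i)
          = (hH.eigenvalues j₀ : ℂ) * (star w ⬝ᵥ w) := by
        simp only [dotProduct, Pi.star_apply, Finset.mul_sum]
        congr 1; funext i; ring
      rw [this, Complex.re_ofReal_mul, re_star_dot, hwnorm]
  revert hray htr hsum
  generalize hH.eigenvalues = μ
  intro hray htr hsum
  have hxnn : (0:ℝ) ≤ ∑ p, ‖x p‖ ^ 2 := Finset.sum_nonneg fun _ _ => by positivity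
  have hWnn : (0:ℝ) ≤ ∑ p, ∑ q, ‖W p q‖ ^ 2 :=
    Finset.sum_nonneg fun _ _ => Finset.sum_nonneg fun _ _ => by positivity
  have hWxnn : (0:ℝ) ≤ ∑ p, ‖(W *ᵥ x) p‖ ^ 2 :=
    Finset.sum_nonneg fun _ _ => by positivity
  rcases hsum with hlam | hsum
  · have h0 : ∑ p, ‖(W *ᵥ x) p‖ ^ 2 ≤ 0 :=
      (hray x).trans (mul_nonpos_of_nonpos_of_nonneg hlam hxnn)
    nlinarith
  · nlinarith [hray x]

end Helpers

section Part2

lemma eigNth_max {k : Type*} [Fintype k] [DecidableEq k] [Nonempty k]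
    (H : Matrix k k ℂ) (hH : H.IsHermitian) :
    (∀ j, hH.eigenvalues j ≤ eigNth H 1) ∧ ∃ j, eigNth H 1 = hH.eigenvalues j := by
  have hs : eigsSorted H = (Finset.univ.toList.map hH.eigenvalues).insertionSort (· ≥ ·) := by
    rw [eigsSorted, dif_pos hH]
  have hlen : (eigsSorted H).length = Fintype.card k := by
    rw [hs, List.length_insertionSort, List.length_map, Finset.length_toList,
      Finset.card_univ]
  have hsorted : (eigsSorted H).Pairwise (· ≥ ·) := by
    rw [hs]; exact List.pairwise_insertionSort _ _
  have hne : eigsSorted H ≠ [] := by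
    intro h
    rw [h] at hlen
    simp at hlen
    exact (Fintype.card_pos (α := k)).ne' hlen.symm
  obtain ⟨a, t, hat⟩ := List.exists_cons_of_ne_nil hne
  have hget : eigNth H 1 = a := by
    rw [eigNth, hat]; rfl
  have hmem_iff : ∀ r : ℝ, r ∈ eigsSorted H ↔ r ∈ Finset.univ.toList.map hH.eigenvalues := by
    intro r
    rw [hs]
    exact (List.perm_insertionSort _ _).mem_iff
  constructor
  · intro j
    have hj : hH.eigenvalues j ∈ eigsSorted H := by
      rw [hmem_iff]
      exact List.mem_map_of_mem (by simp [Finset.mem_toList])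
    rw [hget]
    rw [hat] at hj hsorted
    rcases List.mem_cons.mp hj with h | h
    · rw [h]
    · exact (List.pairwise_cons.mp hsorted).1 _ h
  · have ha : a ∈ eigsSorted H := by rw [hat]; exact List.mem_cons_self
    rw [hmem_iff] at ha
    obtain ⟨j, -, hj⟩ := List.mem_map.mp ha
    exact ⟨j, by rw [hget, hj]⟩

open ComplexOrder in
lemma frobSq_le_two_sv {m n : ℕ} (B : Matrix (Fin n) (Fin m) ℂ) (hB : B.rank ≤ 2) :
    frobSq B ≤ 2 * sv B 1 ^ 2 := by
  have hsv0 : 0 ≤ sv B 1 := Real.sqrt_nonneg _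
  rcases Nat.eq_zero_or_pos m with hm | hm
  · subst hm
    have : frobSq B = 0 := by simp [frobSq]
    rw [this]; positivity
  have : Nonempty (Fin m) := ⟨⟨0, hm⟩⟩
  have hG : (Bᴴ * B).IsHermitian := isHermitian_conjTranspose_mul_self B
  obtain ⟨hle, j₁, hj₁⟩ := eigNth_max (Bᴴ * B) hG
  have hlam0 : 0 ≤ eigNth (Bᴴ * B) 1 := by
    rw [hj₁]; exact B.eigenvalues_conjTranspose_mul_self_nonneg j₁
  have hsv : sv B 1 ^ 2 = eigNth (Bᴴ * B) 1 := Real.sq_sqrt hlam0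
  have htrace : frobSq B = ∑ j, hG.eigenvalues j := by
    rw [frobSq, ← trace_cms B, trace_eq_sum_eigs _ hG]
  have hcard : (Finset.univ.filter (fun j => hG.eigenvalues j ≠ 0)).card ≤ 2 := by
    have h1 := hG.rank_eq_card_non_zero_eigs
    rw [Matrix.rank_conjTranspose_mul_self] at h1
    rw [← Fintype.card_subtype, ← h1]
    exact hB
  have hsum : ∑ j, hG.eigenvalues j
      = ∑ j ∈ Finset.univ.filter (fun j => hG.eigenvalues j ≠ 0), hG.eigenvalues j := by
    rw [Finset.sum_filter_of_ne]
    intro x _ hx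
    exact hx
  have hbound : ∑ j ∈ Finset.univ.filter (fun j => hG.eigenvalues j ≠ 0), hG.eigenvalues j
      ≤ (Finset.univ.filter (fun j => hG.eigenvalues j ≠ 0)).card • eigNth (Bᴴ * B) 1 :=
    Finset.sum_le_card_nsmul _ _ _ fun x _ => hle x
  have hfin : ((Finset.univ.filter (fun j => hG.eigenvalues j ≠ 0)).card : ℝ)
      * eigNth (Bᴴ * B) 1 ≤ 2 * eigNth (Bᴴ * B) 1 := by
    apply mul_le_mul_of_nonneg_right _ hlam0
    exact_mod_cast hcard
  rw [htrace, hsv]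
  rw [nsmul_eq_mul] at hbound
  linarith

end Part2

set_option maxHeartbeats 1000000 in
theorem gbw_rank_two {m n : ℕ} (B : Matrix (Fin n) (Fin m) ℂ) (hB : B.rank ≤ 2)
    (A C : Matrix (Fin m) (Fin n) ℂ) :
    frobSq (A * B * C - C * B * A) ≤ sv B 1 ^ 2 * frobSq (A ⊗ₖ C - C ⊗ₖ A) := by
  classical
  let W : Matrix (Fin m × Fin n) (Fin m × Fin n) ℂ :=
    fun p q => A p.1 q.2 * C q.1 p.2 - C p.1 q.2 * A q.1 p.2
  let x : Fin m × Fin n → ℂ := fun p => B p.2 p.1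
  have hWanti : Wᵀ = -W := by
    funext p q
    show A q.1 p.2 * C p.1 q.2 - C q.1 p.2 * A p.1 q.2
      = -(A p.1 q.2 * C q.1 p.2 - C p.1 q.2 * A q.1 p.2)
    ring
  have hentry : ∀ p : Fin m × Fin n, (W *ᵥ x) p = (A * B * C - C * B * A) p.1 p.2 := by
    intro p
    show (∑ q : Fin m × Fin n,
        (A p.1 q.2 * C q.1 p.2 - C p.1 q.2 * A q.1 p.2) * B q.2 q.1)
      = (A * B * C - C * B * A) p.1 p.2
    rw [Fintype.sum_prod_type]
    simp only [Matrix.sub_apply, mul_apply, Finset.sum_mul]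
    rw [← Finset.sum_sub_distrib]
    congr 1; funext l
    rw [← Finset.sum_sub_distrib]
    congr 1; funext k
    ring
  have h1 : frobSq (A * B * C - C * B * A) = ∑ p, ‖(W *ᵥ x) p‖ ^ 2 := by
    calc frobSq (A * B * C - C * B * A)
        = ∑ i : Fin m, ∑ j : Fin n, ‖(W *ᵥ x) (i, j)‖ ^ 2 := by
          rw [frobSq]
          exact Finset.sum_congr rfl fun i _ => Finset.sum_congr rfl fun j _ => by
            rw [hentry (i, j)]
      _ = ∑ p : Fin m × Fin n, ‖(W *ᵥ x) p‖ ^ 2 :=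
          (Fintype.sum_prod_type
            (f := fun p : Fin m × Fin n => ‖(W *ᵥ x) p‖ ^ 2)).symm
  have h2 : frobSq (A ⊗ₖ C - C ⊗ₖ A) = ∑ p, ∑ q, ‖W p q‖ ^ 2 := by
    have heq : ∀ Q : (Fin m × Fin n) × (Fin m × Fin n),
        ‖W Q.1 Q.2‖ ^ 2
          = ‖(A ⊗ₖ C - C ⊗ₖ A) (Q.1.1, Q.2.1) (Q.2.2, Q.1.2)‖ ^ 2 := by
      intro Q
      show ‖A Q.1.1 Q.2.2 * C Q.2.1 Q.1.2 - C Q.1.1 Q.2.2 * A Q.2.1 Q.1.2‖ ^ 2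
        = ‖(A ⊗ₖ C - C ⊗ₖ A) (Q.1.1, Q.2.1) (Q.2.2, Q.1.2)‖ ^ 2
      simp [Matrix.kroneckerMap_apply, Matrix.sub_apply]
    calc frobSq (A ⊗ₖ C - C ⊗ₖ A)
        = ∑ P : (Fin m × Fin m) × (Fin n × Fin n),
            ‖(A ⊗ₖ C - C ⊗ₖ A) P.1 P.2‖ ^ 2 :=
          (Fintype.sum_prod_type (f := fun P : (Fin m × Fin m) × (Fin n × Fin n) =>
            ‖(A ⊗ₖ C - C ⊗ₖ A) P.1 P.2‖ ^ 2)).symm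
      _ = ∑ Q : (Fin m × Fin n) × (Fin m × Fin n), ‖W Q.1 Q.2‖ ^ 2 :=
          (Fintype.sum_equiv
            (⟨fun Q => ((Q.1.1, Q.2.1), (Q.2.2, Q.1.2)),
              fun P => ((P.1.1, P.2.2), (P.1.2, P.2.1)),
              fun _ => rfl, fun _ => rfl⟩ :
                ((Fin m × Fin n) × (Fin m × Fin n)) ≃ ((Fin m × Fin m) × (Fin n × Fin n)))
            _ _ heq).symm
      _ = ∑ p, ∑ q, ‖W p q‖ ^ 2 := Fintype.sum_prod_type _
  have h3 : ∑ p, ‖x p‖ ^ 2 = frobSq B := by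
    calc ∑ p : Fin m × Fin n, ‖x p‖ ^ 2
        = ∑ l : Fin m, ∑ k : Fin n, ‖B k l‖ ^ 2 := Fintype.sum_prod_type _
      _ = ∑ k : Fin n, ∑ l : Fin m, ‖B k l‖ ^ 2 := Finset.sum_comm
      _ = frobSq B := rfl
  have hkey := key_antisym W hWanti x
  have h4 := frobSq_le_two_sv B hB
  have hWnn : (0:ℝ) ≤ ∑ p, ∑ q, ‖W p q‖ ^ 2 :=
    Finset.sum_nonneg fun _ _ => Finset.sum_nonneg fun _ _ => by positivity
  have hsvnn : (0:ℝ) ≤ sv B 1 ^ 2 := sq_nonneg _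
  rw [h1, h2]
  rw [h3] at hkey
  nlinarith [hkey, h4, hWnn, hsvnn]
end
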